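/- arXiv:1207.0725 — 11 statements merged into one kernel-verified Lean document; each statement's English description precedes it below -/
import Mathlib

section
/- Let q > 0, z > 0, and let f : (0, ∞) → ℝ be measurable and nonnegative. Then ∫_ℝ q·e^{−2q|w|} · (∫_z^{z·e^{−2w}} f(t) dt) dw = ∫_0^∞ K((1/2)·ln(z/t)) · f(t) dt, where K(y) := −sign(y)·(1/2)·e^{−2q|y|}, and where for a < b the expression ∫_b^a f means −∫_a^b f. (Both sides may simultaneously be interpreted as extended-real integrals of the positive and negative parts, or the identity may be stated under the integrability hypothesis ∫_0^∞ min(t, 1/t)^q · f(t) dt < ∞.) -/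
open MeasureTheory intervalIntegral

/-- The kernel `K(y) = -sign(y) · (1/2) · e^{-2q|y|}` obtained from the Laplace
density of the scatterer strengths. -/
noncomputable def laplaceKernel (q y : ℝ) : ℝ :=
  -Real.sign y * (1 / 2) * Real.exp (-(2 * q * |y|))

namespace FLaux

open Real Set
open scoped Interval

/-- Integral of the Laplace density over a right half-line in the positive region. -/
lemma integral_L_Ioi (q : ℝ) (hq : 0 < q) (y : ℝ) (hy : 0 ≤ y) :
    ∫ w in Ioi y, q * exp (-(2 * q * |w|)) = (1/2) * exp (-(2*q*y)) := by
  have h1 : EqOn (fun w => q * exp (-(2 * q * |w|))) (fun w => q * exp (-(2*q*w))) (Ioi y) := by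
    intro w hw
    simp only
    rw [abs_of_nonneg (le_of_lt (lt_of_le_of_lt hy hw))]
  rw [setIntegral_congr_fun measurableSet_Ioi h1]
  have h2 : (∫ w in Ioi y, exp (-(2*q*w))) = (2*q)⁻¹ * exp (-(2*q*y)) := by
    have := integral_comp_mul_left_Ioi (fun x => exp (-x)) y (b := 2*q) (by linarith)
    simpa [smul_eq_mul, integral_exp_neg_Ioi, integral_exp_Iic] using this
  rw [MeasureTheory.integral_const_mul, h2]
  field_simp

lemma integral_L_Iic (q : ℝ) (hq : 0 < q) (y : ℝ) (hy : y ≤ 0) :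
    ∫ w in Iic y, q * exp (-(2 * q * |w|)) = (1/2) * exp (2*q*y) := by
  have h := integral_comp_neg_Ioi (c := -y) (f := fun w => q * exp (-(2*q*|w|)))
  rw [neg_neg] at h
  rw [← h]
  have h1 : EqOn (fun x : ℝ => q * exp (-(2 * q * |(-x)|)))
      (fun w => q * exp (-(2*q*|w|))) (Ioi (-y)) := by
    intro x _; simp [abs_neg]
  rw [setIntegral_congr_fun measurableSet_Ioi h1, integral_L_Ioi q hq (-y) (by linarith)]
  ring_nf

lemma integrable_L (q : ℝ) (hq : 0 < q) :
    Integrable (fun w : ℝ => q * exp (-(2 * q * |w|))) := by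
  have h2q : (0:ℝ) < 2*q := by linarith
  have hIoi : IntegrableOn (fun w : ℝ => q * exp (-(2 * q * |w|))) (Ioi 0) := by
    have base : IntegrableOn (fun w : ℝ => q * exp (-(2*q) * w)) (Ioi 0) :=
      (exp_neg_integrableOn_Ioi 0 h2q).const_mul q
    refine base.congr_fun (fun w hw => ?_) measurableSet_Ioi
    simp only [abs_of_nonneg (le_of_lt (show (0:ℝ) < w from hw))]
    ring_nf
  have hIci : IntegrableOn (fun w : ℝ => q * exp (-(2 * q * |w|))) (Ici 0) :=
    (integrableOn_Ici_iff_integrableOn_Ioi enorm_ne_top).2 hIoi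
  have hIic : IntegrableOn (fun w : ℝ => q * exp (-(2 * q * |w|))) (Iic 0) := by
    have h1 : Integrable ((Ici (0:ℝ)).indicator (fun w : ℝ => q * exp (-(2 * q * |w|)))) :=
      (integrable_indicator_iff measurableSet_Ici).2 hIci
    have h2 := h1.comp_neg
    have h3 : (fun w : ℝ => (Ici (0:ℝ)).indicator (fun w : ℝ => q * exp (-(2 * q * |w|))) (-w))
        = (Iic (0:ℝ)).indicator (fun w : ℝ => q * exp (-(2 * q * |w|))) := by
      funext w
      by_cases hw : w ≤ 0
      · rw [indicator_of_mem (by simpa using hw), indicator_of_mem (by simpa using hw)]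
        simp [abs_neg]
      · rw [indicator_of_notMem (by simpa using hw), indicator_of_notMem (by simpa using hw)]
    rw [h3] at h2
    exact (integrable_indicator_iff measurableSet_Iic).1 h2
  have : IntegrableOn (fun w : ℝ => q * exp (-(2 * q * |w|))) (Iic 0 ∪ Ioi 0) := hIic.union hIoi
  rwa [Iic_union_Ioi, integrableOn_univ] at this

noncomputable def G (q z : ℝ) (f : ℝ → ℝ) (w t : ℝ) : ℝ :=
  q * Real.exp (-(2 * q * |w|)) *
    ((if z ≤ z * Real.exp (-(2 * w)) then (1:ℝ) else -1) *
      (Ι z (z * Real.exp (-(2 * w)))).indicator f t)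

lemma inner_eq (q z : ℝ) (f : ℝ → ℝ) (w : ℝ) :
    q * Real.exp (-(2 * q * |w|)) * (∫ t in z..(z * Real.exp (-(2 * w))), f t) =
      ∫ t, G q z f w t := by
  have h : (∫ t, G q z f w t) =
      q * Real.exp (-(2 * q * |w|)) *
        ((if z ≤ z * Real.exp (-(2 * w)) then (1:ℝ) else -1) *
          ∫ t, (Ι z (z * Real.exp (-(2 * w)))).indicator f t) := by
    unfold G
    rw [MeasureTheory.integral_const_mul, MeasureTheory.integral_const_mul]
  rw [h, intervalIntegral_eq_integral_uIoc, ← MeasureTheory.integral_indicator measurableSet_uIoc]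
  simp [smul_eq_mul]

lemma mem_uIoc_iff (z t : ℝ) (hz : 0 < z) (ht : 0 < t) (w : ℝ) :
    t ∈ Ι z (z * Real.exp (-(2 * w))) ↔
      (z < t ∧ Real.log t ≤ Real.log z - 2*w) ∨ (Real.log z - 2*w < Real.log t ∧ t ≤ z) := by
  have hb : z * Real.exp (-(2 * w)) = Real.exp (Real.log z - 2*w) := by
    conv_lhs => rw [← Real.exp_log hz]
    rw [← Real.exp_add]
    ring_nf
  rw [Set.mem_uIoc, hb, ← Real.log_le_iff_le_exp ht, ← Real.lt_log_iff_exp_lt ht]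

lemma sigma_iff (z w : ℝ) (hz : 0 < z) : z ≤ z * Real.exp (-(2 * w)) ↔ w ≤ 0 := by
  rw [le_mul_iff_one_le_right hz, Real.one_le_exp_iff]
  constructor <;> intro h <;> linarith

lemma G_zero (q z : ℝ) (f : ℝ → ℝ) (hz : 0 < z) {t : ℝ} (ht : t ≤ 0) (w : ℝ) :
    G q z f w t = 0 := by
  have : t ∉ Ι z (z * Real.exp (-(2 * w))) := by
    intro hmem
    rw [Set.mem_uIoc] at hmem
    have hb := mul_pos hz (Real.exp_pos (-(2*w)))
    rcases hmem with ⟨h1, _⟩ | ⟨h1, _⟩ <;> linarith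
  unfold G
  rw [indicator_of_notMem this]
  ring

lemma two_y (z t : ℝ) (hz : 0 < z) (ht : 0 < t) :
    2 * ((1/2) * Real.log (z/t)) = Real.log z - Real.log t := by
  rw [Real.log_div hz.ne' ht.ne']
  ring

/-- slice formula, case `z < t` -/
lemma slice_gt (q z : ℝ) (f : ℝ → ℝ) (hz : 0 < z) {t : ℝ} (ht : z < t) :
    (fun w => G q z f w t) =
      fun w => (Iic ((1/2) * Real.log (z/t))).indicator
        (fun w => q * Real.exp (-(2 * q * |w|))) w * f t := by
  have ht0 : 0 < t := hz.trans ht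
  set y := (1/2) * Real.log (z/t) with hy
  have h2y := two_y z t hz ht0
  have hyneg : y < 0 := by
    have : Real.log t > Real.log z := Real.log_lt_log hz ht
    nlinarith
  funext w
  by_cases hw : w ≤ y
  · have hmem : t ∈ Ι z (z * Real.exp (-(2 * w))) := by
      rw [mem_uIoc_iff z t hz ht0]
      left
      exact ⟨ht, by nlinarith⟩
    have hσ : z ≤ z * Real.exp (-(2 * w)) := (sigma_iff z w hz).2 (by linarith)
    unfold G
    rw [if_pos hσ, indicator_of_mem hmem, indicator_of_mem (by exact hw : w ∈ Iic y)]
    ring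
  · have hmem : t ∉ Ι z (z * Real.exp (-(2 * w))) := by
      rw [mem_uIoc_iff z t hz ht0]
      push_neg
      exact ⟨fun _ => by nlinarith [not_le.1 hw], fun _ => ht⟩
    unfold G
    rw [indicator_of_notMem hmem, indicator_of_notMem (by simpa using hw)]
    ring

/-- slice formula, case `0 < t < z` -/
lemma slice_lt (q z : ℝ) (f : ℝ → ℝ) (hz : 0 < z) {t : ℝ} (ht0 : 0 < t) (ht : t < z) :
    (fun w => G q z f w t) =
      fun w => -((Ioi ((1/2) * Real.log (z/t))).indicator
        (fun w => q * Real.exp (-(2 * q * |w|))) w * f t) := by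
  set y := (1/2) * Real.log (z/t) with hy
  have h2y := two_y z t hz ht0
  have hypos : 0 < y := by
    have : Real.log t < Real.log z := Real.log_lt_log ht0 ht
    nlinarith
  funext w
  by_cases hw : y < w
  · have hmem : t ∈ Ι z (z * Real.exp (-(2 * w))) := by
      rw [mem_uIoc_iff z t hz ht0]
      right
      exact ⟨by nlinarith, ht.le⟩
    have hσ : ¬ z ≤ z * Real.exp (-(2 * w)) := by
      rw [sigma_iff z w hz]
      push_neg
      linarith
    unfold G
    rw [if_neg hσ, indicator_of_mem hmem, indicator_of_mem (by exact hw : w ∈ Ioi y)]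
    ring
  · have hmem : t ∉ Ι z (z * Real.exp (-(2 * w))) := by
      rw [mem_uIoc_iff z t hz ht0]
      push_neg
      exact ⟨fun h => absurd h (not_lt.2 ht.le), fun h => by nlinarith [not_lt.1 hw, h2y]⟩
    unfold G
    rw [indicator_of_notMem hmem, indicator_of_notMem (by simpa using hw)]
    ring

lemma measurable_G (q z : ℝ) (f : ℝ → ℝ) (hmeas : Measurable f) :
    Measurable (Function.uncurry (G q z f)) := by
  have hb : Measurable fun w : ℝ => z * Real.exp (-(2 * w)) := by fun_prop
  have hL : Measurable fun p : ℝ × ℝ => q * Real.exp (-(2 * q * |p.1|)) := by fun_prop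
  have hσ : Measurable fun p : ℝ × ℝ =>
      (if z ≤ z * Real.exp (-(2 * p.1)) then (1:ℝ) else -1) := by
    refine Measurable.ite ?_ measurable_const measurable_const
    exact measurableSet_le measurable_const (hb.comp measurable_fst)
  have hsetm : MeasurableSet {p : ℝ × ℝ | p.2 ∈ Ι z (z * Real.exp (-(2 * p.1)))} := by
    have h1 : Measurable fun p : ℝ × ℝ => min z (z * Real.exp (-(2 * p.1))) :=
      (measurable_const.min (hb.comp measurable_fst))
    have h2 : Measurable fun p : ℝ × ℝ => max z (z * Real.exp (-(2 * p.1))) :=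
      (measurable_const.max (hb.comp measurable_fst))
    have : {p : ℝ × ℝ | p.2 ∈ Ι z (z * Real.exp (-(2 * p.1)))} =
        {p : ℝ × ℝ | min z (z * Real.exp (-(2 * p.1))) < p.2} ∩
          {p : ℝ × ℝ | p.2 ≤ max z (z * Real.exp (-(2 * p.1)))} := by
      ext p
      simp [Set.uIoc, Set.mem_Ioc, min_def, max_def]
    rw [this]
    exact (measurableSet_lt h1 measurable_snd).inter (measurableSet_le measurable_snd h2)
  have hind : Measurable fun p : ℝ × ℝ =>
      (Ι z (z * Real.exp (-(2 * p.1)))).indicator f p.2 := by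
    have : (fun p : ℝ × ℝ => (Ι z (z * Real.exp (-(2 * p.1)))).indicator f p.2) =
        Set.indicator {p : ℝ × ℝ | p.2 ∈ Ι z (z * Real.exp (-(2 * p.1)))}
          (fun p => f p.2) := by
      funext p
      by_cases h : p.2 ∈ Ι z (z * Real.exp (-(2 * p.1)))
      · rw [indicator_of_mem h, indicator_of_mem (by exact h)]
      · rw [indicator_of_notMem h, indicator_of_notMem (by exact h)]
    rw [this]
    exact (hmeas.comp measurable_snd).indicator hsetm
  exact hL.mul (hσ.mul hind)

lemma integral_G (q z : ℝ) (hq : 0 < q) (hz : 0 < z) (f : ℝ → ℝ)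
    {t : ℝ} (ht0 : 0 < t) (htz : t ≠ z) :
    ∫ w, G q z f w t = laplaceKernel q ((1/2) * Real.log (z/t)) * f t := by
  set y := (1/2) * Real.log (z/t) with hy
  rcases lt_or_gt_of_ne htz with ht | ht
  · -- t < z, y > 0
    have hypos : 0 < y := by
      have h2y := two_y z t hz ht0
      have : Real.log t < Real.log z := Real.log_lt_log ht0 ht
      nlinarith
    rw [slice_lt q z f hz ht0 ht]
    rw [MeasureTheory.integral_neg, MeasureTheory.integral_mul_const,
      MeasureTheory.integral_indicator measurableSet_Ioi,
      integral_L_Ioi q hq y hypos.le]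
    unfold laplaceKernel
    rw [Real.sign_of_pos hypos, abs_of_pos hypos]
    ring
  · -- z < t, y < 0
    have hyneg : y < 0 := by
      have h2y := two_y z t hz ht0
      have : Real.log z < Real.log t := Real.log_lt_log hz ht
      nlinarith
    rw [slice_gt q z f hz ht]
    rw [MeasureTheory.integral_mul_const,
      MeasureTheory.integral_indicator measurableSet_Iic,
      integral_L_Iic q hq y hyneg.le]
    unfold laplaceKernel
    rw [Real.sign_of_neg hyneg, abs_of_neg hyneg]
    ring_nf

lemma integral_normG (q z : ℝ) (hq : 0 < q) (hz : 0 < z) (f : ℝ → ℝ)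
    {t : ℝ} (ht0 : 0 < t) (htz : t ≠ z) :
    ∫ w, ‖G q z f w t‖ =
      (1/2) * Real.exp (-(2 * q * |(1/2) * Real.log (z/t)|)) * |f t| := by
  set y := (1/2) * Real.log (z/t) with hy
  have hLnonneg : ∀ s : Set ℝ, ∀ w : ℝ,
      0 ≤ s.indicator (fun w => q * Real.exp (-(2 * q * |w|))) w :=
    fun s w => indicator_nonneg (fun x _ => mul_nonneg hq.le (Real.exp_pos _).le) w
  rcases lt_or_gt_of_ne htz with ht | ht
  · have hypos : 0 < y := by
      have h2y := two_y z t hz ht0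
      have : Real.log t < Real.log z := Real.log_lt_log ht0 ht
      nlinarith
    have h1 : (fun w => ‖G q z f w t‖) =
        fun w => (Ioi y).indicator (fun w => q * Real.exp (-(2 * q * |w|))) w * |f t| := by
      funext w
      rw [congrFun (slice_lt q z f hz ht0 ht) w, norm_neg, Real.norm_eq_abs, abs_mul,
        abs_of_nonneg (hLnonneg _ w)]
    rw [h1, MeasureTheory.integral_mul_const,
      MeasureTheory.integral_indicator measurableSet_Ioi,
      integral_L_Ioi q hq y hypos.le, abs_of_pos hypos]
  · have hyneg : y < 0 := by
      have h2y := two_y z t hz ht0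
      have : Real.log z < Real.log t := Real.log_lt_log hz ht
      nlinarith
    have h1 : (fun w => ‖G q z f w t‖) =
        fun w => (Iic y).indicator (fun w => q * Real.exp (-(2 * q * |w|))) w * |f t| := by
      funext w
      rw [congrFun (slice_gt q z f hz ht) w, Real.norm_eq_abs, abs_mul,
        abs_of_nonneg (hLnonneg _ w)]
    rw [h1, MeasureTheory.integral_mul_const,
      MeasureTheory.integral_indicator measurableSet_Iic,
      integral_L_Iic q hq y hyneg.le, abs_of_neg hyneg]
    ring_nf

lemma coeff_le (q z : ℝ) (hq : 0 < q) (hz : 0 < z) (t : ℝ) (ht : 0 < t) :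
    Real.exp (-(2*q*|(1/2) * Real.log (z/t)|)) ≤ (max z z⁻¹)^q * (min t t⁻¹)^q := by
  have hr : 0 < z/t := div_pos hz ht
  have habs : (-(2*q*|(1/2) * Real.log (z/t)|)) = (-(2*q*((1/2) * |Real.log (z/t)|))) := by
    rw [abs_mul]
    norm_num
  have key : Real.exp (-(2*q*((1/2) * |Real.log (z/t)|))) = (min (z/t) (z/t)⁻¹)^q := by
    rcases le_total 1 (z/t) with h | h
    · have h1 : (z/t)⁻¹ ≤ (z/t) := by nlinarith [inv_mul_cancel₀ hr.ne', inv_pos.2 hr]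
      rw [min_eq_right h1, Real.rpow_def_of_pos (inv_pos.2 hr), Real.log_inv,
        abs_of_nonneg (Real.log_nonneg h)]
      congr 1; ring
    · have h1 : (z/t) ≤ (z/t)⁻¹ := by nlinarith [inv_mul_cancel₀ hr.ne', inv_pos.2 hr]
      rw [min_eq_left h1, Real.rpow_def_of_pos hr,
        abs_of_nonpos (Real.log_nonpos hr.le h)]
      congr 1; ring
  rw [habs, key]
  have hM : (0:ℝ) < max z z⁻¹ := lt_max_of_lt_left hz
  have hmin : min (z/t) (z/t)⁻¹ ≤ max z z⁻¹ * min t t⁻¹ := by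
    rcases le_total t t⁻¹ with h | h
    · rw [min_eq_left h]
      calc min (z/t) (z/t)⁻¹ ≤ (z/t)⁻¹ := min_le_right _ _
        _ = z⁻¹ * t := by rw [inv_div]; ring
        _ ≤ max z z⁻¹ * t := mul_le_mul_of_nonneg_right (le_max_right _ _) ht.le
    · rw [min_eq_right h]
      calc min (z/t) (z/t)⁻¹ ≤ z/t := min_le_left _ _
        _ = z * t⁻¹ := by ring
        _ ≤ max z z⁻¹ * t⁻¹ := mul_le_mul_of_nonneg_right (le_max_left _ _) (inv_pos.2 ht).le
  calc (min (z/t) (z/t)⁻¹)^q ≤ (max z z⁻¹ * min t t⁻¹)^q :=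
        Real.rpow_le_rpow (le_min hr.le (inv_pos.2 hr).le) hmin hq.le
    _ = (max z z⁻¹)^q * (min t t⁻¹)^q :=
        Real.mul_rpow hM.le (le_min ht.le (inv_pos.2 ht).le)

lemma measurable_G_slice (q z : ℝ) (f : ℝ → ℝ) (hmeas : Measurable f) (t : ℝ) :
    Measurable (fun w => G q z f w t) := by
  have hb : Measurable fun w : ℝ => z * Real.exp (-(2 * w)) := by fun_prop
  have hL : Measurable fun w : ℝ => q * Real.exp (-(2 * q * |w|)) := by fun_prop
  have hσ : Measurable fun w : ℝ =>
      (if z ≤ z * Real.exp (-(2 * w)) then (1:ℝ) else -1) :=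
    Measurable.ite (measurableSet_le measurable_const hb) measurable_const measurable_const
  have hsetm : MeasurableSet {w : ℝ | t ∈ Ι z (z * Real.exp (-(2 * w)))} := by
    have h1 : Measurable fun w : ℝ => min z (z * Real.exp (-(2 * w))) :=
      measurable_const.min hb
    have h2 : Measurable fun w : ℝ => max z (z * Real.exp (-(2 * w))) :=
      measurable_const.max hb
    have : {w : ℝ | t ∈ Ι z (z * Real.exp (-(2 * w)))} =
        {w : ℝ | min z (z * Real.exp (-(2 * w))) < t} ∩
          {w : ℝ | t ≤ max z (z * Real.exp (-(2 * w)))} := by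
      ext w
      simp [Set.uIoc, Set.mem_Ioc]
    rw [this]
    exact (measurableSet_lt h1 measurable_const).inter (measurableSet_le measurable_const h2)
  have hind : Measurable fun w : ℝ => (Ι z (z * Real.exp (-(2 * w)))).indicator f t := by
    have : (fun w : ℝ => (Ι z (z * Real.exp (-(2 * w)))).indicator f t) =
        Set.indicator {w : ℝ | t ∈ Ι z (z * Real.exp (-(2 * w)))} (fun _ => f t) := by
      funext w
      by_cases h : t ∈ Ι z (z * Real.exp (-(2 * w)))
      · rw [Set.indicator_of_mem h, Set.indicator_of_mem (by exact h)]
      · rw [Set.indicator_of_notMem h, Set.indicator_of_notMem (by exact h)]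
    rw [this]
    exact measurable_const.indicator hsetm
  exact hL.mul (hσ.mul hind)

end FLaux

set_option maxHeartbeats 1000000 in
/-- **Convolution form of the Frisch–Lloyd integral term.**
For `q > 0`, `z > 0` and a nonnegative measurable `f` with
`∫_0^∞ min(t, 1/t)^q f(t) dt < ∞`,
`∫_ℝ q e^{-2q|w|} (∫_z^{z e^{-2w}} f) dw = ∫_0^∞ K(½ ln(z/t)) f(t) dt`. -/
theorem frisch_lloyd_kernel_form
    (q z : ℝ) (hq : 0 < q) (hz : 0 < z) (f : ℝ → ℝ)
    (hmeas : Measurable f) (hpos : ∀ t ∈ Set.Ioi (0:ℝ), 0 ≤ f t)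
    (hint : IntegrableOn (fun t => (min t t⁻¹) ^ q * f t) (Set.Ioi 0)) :
    ∫ w : ℝ, q * Real.exp (-(2 * q * |w|)) *
        (∫ t in z..(z * Real.exp (-(2 * w))), f t) =
      ∫ t in Set.Ioi (0:ℝ), laplaceKernel q ((1 / 2) * Real.log (z / t)) * f t := by
  classical
  have hG : Measurable (Function.uncurry (FLaux.G q z f)) := FLaux.measurable_G q z f hmeas
  have hGslice : ∀ t, Measurable (fun w => FLaux.G q z f w t) := fun t =>
    FLaux.measurable_G_slice q z f hmeas t
  have hzae : ∀ᵐ t : ℝ, t ≠ z := by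
    have hsing : (volume : Measure ℝ) {z} = 0 := measure_singleton z
    rw [MeasureTheory.ae_iff]
    convert hsing using 2
    ext t
    simp
  -- Integrability on the product space
  have key : Integrable (Function.uncurry (FLaux.G q z f)) (volume.prod volume) := by
    rw [MeasureTheory.integrable_prod_iff' hG.aestronglyMeasurable]
    constructor
    · refine Filter.Eventually.of_forall (fun t => ?_)
      refine ((FLaux.integrable_L q hq).mul_const |f t|).mono'
        (hGslice t).aestronglyMeasurable ?_
      refine Filter.Eventually.of_forall (fun w => ?_)
      show ‖FLaux.G q z f w t‖ ≤ q * Real.exp (-(2 * q * |w|)) * |f t|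
      unfold FLaux.G
      have h1 : ‖if z ≤ z * Real.exp (-(2 * w)) then (1:ℝ) else -1‖ = 1 := by
        split_ifs <;> simp
      rw [norm_mul, norm_mul, norm_mul, h1, one_mul, Real.norm_eq_abs q,
        Real.norm_eq_abs (Real.exp (-(2 * q * |w|))), abs_of_pos hq,
        abs_of_pos (Real.exp_pos _)]
      have h2 : ‖(Set.uIoc z (z * Real.exp (-(2 * w)))).indicator f t‖ ≤ |f t| :=
        norm_indicator_le_norm_self f t
      exact mul_le_mul_of_nonneg_left h2 (mul_nonneg hq.le (Real.exp_pos _).le)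
    · have hB : Integrable ((Set.Ioi (0:ℝ)).indicator
          (fun t => (max z z⁻¹)^q * ((min t t⁻¹)^q * f t))) :=
        (integrable_indicator_iff measurableSet_Ioi).2 (hint.const_mul ((max z z⁻¹)^q))
      refine hB.mono' ?_ ?_
      · exact (hG.norm.stronglyMeasurable.integral_prod_left').aestronglyMeasurable
      · filter_upwards [hzae] with t htz
        by_cases ht0 : 0 < t
        · have hnn : 0 ≤ ∫ w, ‖Function.uncurry (FLaux.G q z f) (w, t)‖ :=
            integral_nonneg (fun w => norm_nonneg _)
          rw [Real.norm_eq_abs, abs_of_nonneg hnn]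
          have heq : (∫ w, ‖Function.uncurry (FLaux.G q z f) (w, t)‖) =
              (1/2) * Real.exp (-(2 * q * |(1/2) * Real.log (z/t)|)) * |f t| :=
            FLaux.integral_normG q z hq hz f ht0 htz
          rw [heq, Set.indicator_of_mem (Set.mem_Ioi.2 ht0)]
          have hf : |f t| = f t := abs_of_nonneg (hpos t ht0)
          rw [hf]
          have hc := FLaux.coeff_le q z hq hz t ht0
          have hfnn : 0 ≤ f t := hpos t ht0
          nlinarith [Real.exp_pos (-(2 * q * |(1/2) * Real.log (z/t)|))]
        · push_neg at ht0
          have hzero : ∀ w, Function.uncurry (FLaux.G q z f) (w, t) = 0 := fun w =>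
            FLaux.G_zero q z f hz ht0 w
          have h0 : (∫ w, ‖Function.uncurry (FLaux.G q z f) (w, t)‖) = 0 := by
            simp only [hzero, norm_zero, MeasureTheory.integral_zero]
          rw [h0, Set.indicator_of_notMem (by simpa using ht0)]
          simp
  -- Main computation
  calc
    ∫ w : ℝ, q * Real.exp (-(2 * q * |w|)) * (∫ t in z..(z * Real.exp (-(2 * w))), f t)
        = ∫ w, ∫ t, FLaux.G q z f w t := by
          refine integral_congr_ae (Filter.Eventually.of_forall (fun w => ?_))
          exact FLaux.inner_eq q z f w
    _ = ∫ t, ∫ w, FLaux.G q z f w t := MeasureTheory.integral_integral_swap key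
    _ = ∫ t in Set.Ioi (0:ℝ), ∫ w, FLaux.G q z f w t := by
          refine (setIntegral_eq_integral_of_forall_compl_eq_zero fun t ht => ?_).symm
          have ht' : t ≤ 0 := by simpa using ht
          simp only [FLaux.G_zero q z f hz ht', MeasureTheory.integral_zero]
    _ = ∫ t in Set.Ioi (0:ℝ), laplaceKernel q ((1 / 2) * Real.log (z / t)) * f t := by
          refine setIntegral_congr_ae measurableSet_Ioi ?_
          filter_upwards [hzae] with t htz ht0
          exact FLaux.integral_G q z hq hz f ht0 htz
end

section
/- Let p > 0, q > 0, and let ρ(w) := q·e^{−2q|w|}. Suppose f : (0, ∞) → ℝ is measurable with ∫_0^∞ min(t, 1/t)^q·|f(t)| dt < ∞ and satisfies, for every z > 0, the Frisch–Lloyd equation at energy E = −1 with vanishing integrated density of states: (z² − 1)·f(z) + p·∫_ℝ ρ(w)·(∫_z^{z·e^{−2w}} f(t) dt) dw = 0. Then the function g(z) := f(1/z)/z² satisfies the same equation: (z² − 1)·g(z) + p·∫_ℝ ρ(w)·(∫_z^{z·e^{−2w}} g(t) dt) dw = 0 for every z > 0. -/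
open MeasureTheory intervalIntegral

lemma fl_image_inv (a b : ℝ) (ha : 0 < a) (hab : a ≤ b) :
    Inv.inv '' Set.Ioo a b = Set.Ioo b⁻¹ a⁻¹ := by
  ext x
  simp only [Set.mem_image, Set.mem_Ioo]
  constructor
  · rintro ⟨t, ⟨h1, h2⟩, rfl⟩
    have ht : 0 < t := ha.trans h1
    exact ⟨by rw [inv_lt_inv₀ (ht.trans h2) ht]; exact h2,
      by rw [inv_lt_inv₀ ht ha]; exact h1⟩
  · rintro ⟨h1, h2⟩
    have hx : 0 < x := lt_trans (inv_pos.mpr (ha.trans_le hab)) h1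
    refine ⟨x⁻¹, ⟨?_, ?_⟩, inv_inv x⟩
    · rw [← inv_inv a]; exact inv_lt_inv₀ (inv_pos.mpr ha) hx |>.mpr h2
    · rw [← inv_inv b]; exact inv_lt_inv₀ hx (inv_pos.mpr (ha.trans_le hab)) |>.mpr h1

lemma fl_subst_aux (f : ℝ → ℝ) (a b : ℝ) (ha : 0 < a) (hab : a ≤ b) :
    ∫ t in a..b, f t⁻¹ / t ^ 2 = ∫ s in b⁻¹..a⁻¹, f s := by
  have hba : b⁻¹ ≤ a⁻¹ := by
    exact inv_anti₀ ha hab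
  rw [intervalIntegral.integral_of_le hab, intervalIntegral.integral_of_le hba,
    MeasureTheory.integral_Ioc_eq_integral_Ioo, MeasureTheory.integral_Ioc_eq_integral_Ioo,
    ← fl_image_inv a b ha hab]
  rw [MeasureTheory.integral_image_eq_integral_abs_deriv_smul measurableSet_Ioo
    (fun x hx => ((hasDerivAt_inv (ne_of_gt (ha.trans hx.1))).hasDerivWithinAt))
    (inv_injective.injOn) f]
  refine MeasureTheory.setIntegral_congr_fun measurableSet_Ioo (fun x hx => ?_)
  have hx0 : 0 < x := ha.trans hx.1
  rw [smul_eq_mul, abs_neg, abs_inv, abs_pow, abs_of_pos hx0]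
  ring

lemma fl_subst (f : ℝ → ℝ) (a b : ℝ) (ha : 0 < a) (hb : 0 < b) :
    ∫ t in a..b, f t⁻¹ / t ^ 2 = ∫ s in b⁻¹..a⁻¹, f s := by
  rcases le_total a b with h | h
  · exact fl_subst_aux f a b ha h
  · rw [intervalIntegral.integral_symm, fl_subst_aux f b a hb h,
      intervalIntegral.integral_symm, neg_neg]

/-- **Involution symmetry of the Frisch–Lloyd equation at energy `E = -1`.**
If `f` solves `(z²-1) f(z) + p ∫ ρ(w) (∫_z^{z e^{-2w}} f) dw = 0` for all `z > 0`,
with `ρ(w) = q e^{-2q|w|}`, then `g(z) := f(1/z)/z²` solves the same equation. -/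
theorem frisch_lloyd_involution
    (p q : ℝ) (hp : 0 < p) (hq : 0 < q) (f : ℝ → ℝ)
    (hmeas : Measurable f)
    (hint : IntegrableOn (fun t => (min t t⁻¹) ^ q * |f t|) (Set.Ioi 0))
    (heq : ∀ z : ℝ, 0 < z →
      (z ^ 2 - 1) * f z +
          p * ∫ w : ℝ, q * Real.exp (-(2 * q * |w|)) *
            (∫ t in z..(z * Real.exp (-(2 * w))), f t) = 0)
    (g : ℝ → ℝ) (hg : ∀ z : ℝ, g z = f z⁻¹ / z ^ 2) :
    ∀ z : ℝ, 0 < z →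
      (z ^ 2 - 1) * g z +
          p * ∫ w : ℝ, q * Real.exp (-(2 * q * |w|)) *
            (∫ t in z..(z * Real.exp (-(2 * w))), g t) = 0 := by
  intro z hz
  have hz' : (0:ℝ) < z⁻¹ := inv_pos.mpr hz
  have hgfun : g = fun t => f t⁻¹ / t ^ 2 := funext hg
  -- inner integral rewrite
  have hinner : ∀ w : ℝ, (∫ t in z..(z * Real.exp (-(2 * w))), g t)
      = -(∫ t in z⁻¹..(z⁻¹ * Real.exp (2 * w)), f t) := by
    intro w
    have hpos : 0 < z * Real.exp (-(2 * w)) := mul_pos hz (Real.exp_pos _)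
    rw [hgfun, fl_subst f z (z * Real.exp (-(2 * w))) hz hpos]
    rw [mul_inv, ← Real.exp_neg, neg_neg, intervalIntegral.integral_symm]
  -- rewrite the w-integral
  have hw : (∫ w : ℝ, q * Real.exp (-(2 * q * |w|)) *
        (∫ t in z..(z * Real.exp (-(2 * w))), g t))
      = -(∫ w : ℝ, q * Real.exp (-(2 * q * |w|)) *
        (∫ t in z⁻¹..(z⁻¹ * Real.exp (-(2 * w))), f t)) := by
    have h1 : (∫ w : ℝ, q * Real.exp (-(2 * q * |w|)) *
          (∫ t in z..(z * Real.exp (-(2 * w))), g t))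
        = ∫ w : ℝ, -(q * Real.exp (-(2 * q * |w|)) *
          (∫ t in z⁻¹..(z⁻¹ * Real.exp (2 * w)), f t)) := by
      congr 1
      funext w
      rw [hinner w]; ring
    rw [h1, MeasureTheory.integral_neg]
    congr 1
    have := MeasureTheory.integral_neg_eq_self
      (fun w : ℝ => q * Real.exp (-(2 * q * |w|)) *
        (∫ t in z⁻¹..(z⁻¹ * Real.exp (-(2 * w))), f t)) (volume : Measure ℝ)
    simp only [abs_neg, neg_neg, mul_neg] at this
    rw [← this]
  rw [hw, hg z]
  have key := heq z⁻¹ hz'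
  have hz0 : z ≠ 0 := ne_of_gt hz
  have hexp : (z ^ 2 - 1) * (f z⁻¹ / z ^ 2) = -(((z⁻¹) ^ 2 - 1) * f z⁻¹) := by
    field_simp
    ring
  rw [hexp]
  linarith [key]
end

section
/- Let p > 0, q > 0, and let K(y) := −sign(y)·(1/2)·e^{−2q|y|}. Suppose f : (0, ∞) → ℝ is continuous, satisfies ∫_0^∞ min(t, 1/t)^q·|f(t)| dt < ∞, and satisfies for every z > 0 the integral equation (z² − 1)·f(z) + p·∫_0^∞ K((1/2)·ln(z/t))·f(t) dt = 0. Then the function φ(z) := (z² − 1)·f(z) is twice differentiable on (0, 1) ∪ (1, ∞) and satisfies there the second-order linear differential equation z·(d/dz)[ z·( φ'(z) − p·φ(z)/(z² − 1) ) ] − q²·φ(z) = 0. -/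
open MeasureTheory

/-- **Reduction of the Frisch–Lloyd equation to a differential equation.**
If the continuous `f` solves `(z²-1) f(z) + p ∫_0^∞ K(½ ln(z/t)) f(t) dt = 0`
on `(0,∞)`, then `φ(z) := (z²-1) f(z)` is twice differentiable on
`(0,1) ∪ (1,∞)` and satisfies
`z (d/dz)[ z (φ' - p φ/(z²-1)) ] - q² φ = 0` there. -/
theorem frisch_lloyd_to_ode
    (p q : ℝ) (hp : 0 < p) (hq : 0 < q) (f : ℝ → ℝ)
    (hcont : ContinuousOn f (Set.Ioi 0))
    (hint : IntegrableOn (fun t => (min t t⁻¹) ^ q * |f t|) (Set.Ioi 0))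
    (heq : ∀ z : ℝ, 0 < z →
      (z ^ 2 - 1) * f z +
          p * ∫ t in Set.Ioi (0:ℝ),
            laplaceKernel q ((1 / 2) * Real.log (z / t)) * f t = 0)
    (φ χ : ℝ → ℝ)
    (hφ : φ = fun z => (z ^ 2 - 1) * f z)
    (hχ : χ = fun z => z * (deriv φ z - p * φ z / (z ^ 2 - 1))) :
    ∀ z ∈ Set.Ioo (0:ℝ) 1 ∪ Set.Ioi 1,
      DifferentiableAt ℝ φ z ∧ DifferentiableAt ℝ χ z ∧
        z * deriv χ z - q ^ 2 * φ z = 0 := by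
  -- continuity of weighted integrands on (0,∞)
  have hrpow : ∀ r : ℝ, ContinuousOn (fun t : ℝ => t ^ r * f t) (Set.Ioi 0) := by
    intro r
    refine ContinuousOn.mul (fun t ht => ?_) hcont
    exact (Real.continuousAt_rpow_const t r (Or.inl (ne_of_gt ht))).continuousWithinAt
  -- integrability of t^q f near 0
  have hIntLow : IntegrableOn (fun t : ℝ => t ^ q * f t) (Set.Ioc 0 1) := by
    refine Integrable.mono' (hint.mono_set Set.Ioc_subset_Ioi_self)
      (((hrpow q).mono Set.Ioc_subset_Ioi_self).aestronglyMeasurable measurableSet_Ioc) ?_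
    filter_upwards [ae_restrict_mem measurableSet_Ioc] with t ht
    have h0 : (0:ℝ) < t := ht.1
    have h1 : t ≤ t⁻¹ := ht.2.trans (one_le_inv₀ h0 |>.mpr ht.2)
    rw [min_eq_left h1, Real.norm_eq_abs, abs_mul,
      abs_of_nonneg (Real.rpow_nonneg h0.le q)]
  -- integrability of t^(-q) f near ∞
  have hIntHigh : IntegrableOn (fun t : ℝ => t ^ (-q) * f t) (Set.Ioi 1) := by
    refine Integrable.mono' (hint.mono_set (Set.Ioi_subset_Ioi zero_le_one))
      (((hrpow (-q)).mono (Set.Ioi_subset_Ioi zero_le_one)).aestronglyMeasurable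
        measurableSet_Ioi) ?_
    filter_upwards [ae_restrict_mem measurableSet_Ioi] with t ht
    have h1 : (1:ℝ) ≤ t := le_of_lt ht
    have h0 : (0:ℝ) < t := lt_of_lt_of_le one_pos h1
    have hmin : min t t⁻¹ = t⁻¹ := min_eq_right ((inv_le_one_of_one_le₀ h1).trans h1)
    rw [hmin, Real.norm_eq_abs, abs_mul, Real.inv_rpow h0.le, ← Real.rpow_neg h0.le,
      abs_of_nonneg (Real.rpow_nonneg h0.le (-q))]
  -- integrability on (0,z] and (z,∞)
  have hIntA : ∀ z : ℝ, 0 < z → IntegrableOn (fun t : ℝ => t ^ q * f t) (Set.Ioc 0 z) := by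
    intro z hz
    rcases le_total z 1 with h | h
    · exact hIntLow.mono_set (Set.Ioc_subset_Ioc_right h)
    · rw [show Set.Ioc 0 z = Set.Ioc 0 1 ∪ Set.Ioc 1 z from
        (Set.Ioc_union_Ioc_eq_Ioc zero_le_one h).symm]
      refine hIntLow.union ?_
      refine IntegrableOn.mono_set ?_ Set.Ioc_subset_Icc_self
      exact ContinuousOn.integrableOn_Icc <| (hrpow q).mono fun t ht =>
        lt_of_lt_of_le one_pos ht.1
  have hIntB : ∀ z : ℝ, 0 < z → IntegrableOn (fun t : ℝ => t ^ (-q) * f t) (Set.Ioi z) := by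
    intro z hz
    rcases le_total 1 z with h | h
    · exact hIntHigh.mono_set (Set.Ioi_subset_Ioi h)
    · rw [show Set.Ioi z = Set.Ioc z 1 ∪ Set.Ioi 1 from (Set.Ioc_union_Ioi_eq_Ioi h).symm]
      refine IntegrableOn.union ?_ hIntHigh
      refine IntegrableOn.mono_set ?_ Set.Ioc_subset_Icc_self
      exact ContinuousOn.integrableOn_Icc <| (hrpow (-q)).mono fun t ht => lt_of_lt_of_le hz ht.1
  set c1 : ℝ := ∫ t in Set.Ioc (0:ℝ) 1, t ^ q * f t with hc1
  set c2 : ℝ := ∫ t in Set.Ioi (1:ℝ), t ^ (-q) * f t with hc2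
  set A : ℝ → ℝ := fun z => c1 + ∫ t in (1:ℝ)..z, t ^ q * f t with hA_def
  set B : ℝ → ℝ := fun z => c2 - ∫ t in (1:ℝ)..z, t ^ (-q) * f t with hB_def
  -- FTC derivatives
  have huIcc : ∀ z : ℝ, 0 < z → Set.uIcc (1:ℝ) z ⊆ Set.Ioi 0 := by
    intro z hz t ht
    have : (0:ℝ) < min 1 z := lt_min one_pos hz
    exact lt_of_lt_of_le this ht.1
  have hAD : ∀ z : ℝ, 0 < z → HasDerivAt A (z ^ q * f z) z := by
    intro z hz
    refine HasDerivAt.const_add c1 ?_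
    refine intervalIntegral.integral_hasDerivAt_right
      (ContinuousOn.intervalIntegrable ((hrpow q).mono (huIcc z hz)))
      (ContinuousOn.stronglyMeasurableAtFilter isOpen_Ioi (hrpow q) z hz)
      ((hrpow q).continuousAt (Ioi_mem_nhds hz))
  have hBD : ∀ z : ℝ, 0 < z → HasDerivAt B (-(z ^ (-q) * f z)) z := by
    intro z hz
    refine HasDerivAt.const_sub c2 ?_
    refine intervalIntegral.integral_hasDerivAt_right
      (ContinuousOn.intervalIntegrable ((hrpow (-q)).mono (huIcc z hz)))
      (ContinuousOn.stronglyMeasurableAtFilter isOpen_Ioi (hrpow (-q)) z hz)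
      ((hrpow (-q)).continuousAt (Ioi_mem_nhds hz))
  -- the partial integrals
  have hA : ∀ z : ℝ, 0 < z → (∫ t in Set.Ioc (0:ℝ) z, t ^ q * f t) = A z := by
    intro z hz
    rcases le_total 1 z with h | h
    · rw [show Set.Ioc 0 z = Set.Ioc 0 1 ∪ Set.Ioc 1 z from
        (Set.Ioc_union_Ioc_eq_Ioc zero_le_one h).symm,
        setIntegral_union (Set.Ioc_disjoint_Ioc_of_le le_rfl) measurableSet_Ioc hIntLow
          ((hIntA z hz).mono_set (Set.Ioc_subset_Ioc_left zero_le_one)),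
        hA_def]
      simp [intervalIntegral.integral_of_le h, hc1]
    · have hsplit : (∫ t in Set.Ioc (0:ℝ) z, t ^ q * f t)
          + ∫ t in Set.Ioc z 1, t ^ q * f t = c1 := by
        rw [← setIntegral_union (Set.Ioc_disjoint_Ioc_of_le le_rfl) measurableSet_Ioc (hIntA z hz)
          (hIntLow.mono_set (Set.Ioc_subset_Ioc_left hz.le)),
          Set.Ioc_union_Ioc_eq_Ioc hz.le h]
      have haz : (∫ t in (1:ℝ)..z, t ^ q * f t) = -∫ t in Set.Ioc z 1, t ^ q * f t := by
        rw [intervalIntegral.integral_symm, intervalIntegral.integral_of_le h]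
      rw [hA_def]
      simp only [haz]
      linarith
  have hB : ∀ z : ℝ, 0 < z → (∫ t in Set.Ioi z, t ^ (-q) * f t) = B z := by
    intro z hz
    rcases le_total 1 z with h | h
    · have hsplit : (∫ t in Set.Ioc (1:ℝ) z, t ^ (-q) * f t)
          + ∫ t in Set.Ioi z, t ^ (-q) * f t = c2 := by
        rw [← setIntegral_union (Set.Ioc_disjoint_Ioi le_rfl) measurableSet_Ioi
          (hIntHigh.mono_set fun t ht => Set.mem_Ioi.mpr ht.1) (hIntB z hz),
          Set.Ioc_union_Ioi_eq_Ioi h]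
      have hbz : (∫ t in (1:ℝ)..z, t ^ (-q) * f t) = ∫ t in Set.Ioc 1 z, t ^ (-q) * f t :=
        intervalIntegral.integral_of_le h
      rw [hB_def]
      simp only [hbz]
      linarith
    · have hsplit : (∫ t in Set.Ioi z, t ^ (-q) * f t)
          = (∫ t in Set.Ioc z 1, t ^ (-q) * f t) + c2 := by
        rw [← setIntegral_union (Set.Ioc_disjoint_Ioi le_rfl) measurableSet_Ioi
          ((hIntB z hz).mono_set fun t ht => Set.mem_Ioi.mpr ht.1) hIntHigh,
          Set.Ioc_union_Ioi_eq_Ioi h]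
      have hbz : (∫ t in (1:ℝ)..z, t ^ (-q) * f t) = -∫ t in Set.Ioc z 1, t ^ (-q) * f t := by
        rw [intervalIntegral.integral_symm, intervalIntegral.integral_of_le h]
      rw [hB_def]
      simp only [hbz]
      linarith
  -- pointwise kernel computation
  have hk1 : ∀ z : ℝ, 0 < z → ∀ t ∈ Set.Ioo (0:ℝ) z,
      laplaceKernel q ((1 / 2) * Real.log (z / t)) * f t
        = -(1/2) * z ^ (-q) * (t ^ q * f t) := by
    intro z hz t ht
    have ht0 : (0:ℝ) < t := ht.1
    have hzt : 1 < z / t := (one_lt_div ht0).2 ht.2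
    have hy : 0 < (1/2 : ℝ) * Real.log (z / t) := by
      have := Real.log_pos hzt; linarith
    have hexp : Real.exp (-(2 * q * |(1/2 : ℝ) * Real.log (z / t)|)) = (z / t) ^ (-q) := by
      rw [abs_of_pos hy, Real.rpow_def_of_pos (div_pos hz ht0)]
      congr 1; ring
    have hpow : (z / t) ^ (-q) = z ^ (-q) * t ^ q := by
      rw [Real.div_rpow hz.le ht0.le, Real.rpow_neg ht0.le, div_eq_mul_inv, inv_inv,
        Real.rpow_neg hz.le, inv_mul_eq_div]
    unfold laplaceKernel
    rw [Real.sign_of_pos hy, hexp, hpow]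
    ring
  have hk2 : ∀ z : ℝ, 0 < z → ∀ t ∈ Set.Ioi z,
      laplaceKernel q ((1 / 2) * Real.log (z / t)) * f t
        = (1/2) * z ^ q * (t ^ (-q) * f t) := by
    intro z hz t ht
    have ht0 : (0:ℝ) < t := hz.trans ht
    have hzt : z / t < 1 := (div_lt_one ht0).2 ht
    have hy : (1/2 : ℝ) * Real.log (z / t) < 0 := by
      have := Real.log_neg (div_pos hz ht0) hzt; linarith
    have hexp : Real.exp (-(2 * q * |(1/2 : ℝ) * Real.log (z / t)|)) = (z / t) ^ q := by
      rw [abs_of_neg hy, Real.rpow_def_of_pos (div_pos hz ht0)]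
      congr 1; ring
    have hpow : (z / t) ^ q = z ^ q * t ^ (-q) := by
      rw [Real.div_rpow hz.le ht0.le, Real.rpow_neg ht0.le, div_eq_mul_inv]
    unfold laplaceKernel
    rw [Real.sign_of_neg hy, hexp, hpow]
    ring
  -- the representation of φ
  have hrepφ : ∀ z : ℝ, 0 < z → φ z = p / 2 * (z ^ (-q) * A z - z ^ q * B z) := by
    intro z hz
    have hKint1 : IntegrableOn
        (fun t => laplaceKernel q ((1 / 2) * Real.log (z / t)) * f t) (Set.Ioo 0 z) := by
      refine IntegrableOn.congr_fun ?_ (fun t ht => (hk1 z hz t ht).symm) measurableSet_Ioo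
      exact (((hIntA z hz).mono_set Set.Ioo_subset_Ioc_self).const_mul (-(1/2) * z ^ (-q)))
    have hKint1' : IntegrableOn
        (fun t => laplaceKernel q ((1 / 2) * Real.log (z / t)) * f t) (Set.Ioc 0 z) := by
      rw [IntegrableOn, ← Measure.restrict_congr_set Ioo_ae_eq_Ioc]
      exact hKint1
    have hKint2 : IntegrableOn
        (fun t => laplaceKernel q ((1 / 2) * Real.log (z / t)) * f t) (Set.Ioi z) := by
      refine IntegrableOn.congr_fun ?_ (fun t ht => (hk2 z hz t ht).symm) measurableSet_Ioi
      exact ((hIntB z hz).const_mul ((1/2) * z ^ q))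
    have hsplit : (∫ t in Set.Ioi (0:ℝ),
          laplaceKernel q ((1 / 2) * Real.log (z / t)) * f t)
        = (∫ t in Set.Ioc (0:ℝ) z, laplaceKernel q ((1 / 2) * Real.log (z / t)) * f t)
          + ∫ t in Set.Ioi z, laplaceKernel q ((1 / 2) * Real.log (z / t)) * f t := by
      rw [← Set.Ioc_union_Ioi_eq_Ioi hz.le]
      exact setIntegral_union (Set.Ioc_disjoint_Ioi le_rfl) measurableSet_Ioi hKint1' hKint2
    have hI1 : (∫ t in Set.Ioc (0:ℝ) z, laplaceKernel q ((1 / 2) * Real.log (z / t)) * f t)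
        = -(1/2) * z ^ (-q) * A z := by
      rw [integral_Ioc_eq_integral_Ioo,
        setIntegral_congr_fun measurableSet_Ioo (fun t ht => hk1 z hz t ht),
        integral_const_mul, ← integral_Ioc_eq_integral_Ioo, hA z hz]
    have hI2 : (∫ t in Set.Ioi z, laplaceKernel q ((1 / 2) * Real.log (z / t)) * f t)
        = (1/2) * z ^ q * B z := by
      rw [setIntegral_congr_fun measurableSet_Ioi (fun t ht => hk2 z hz t ht),
        integral_const_mul, hB z hz]
    have h0 := heq z hz
    rw [hsplit, hI1, hI2] at h0
    rw [hφ]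
    simp only
    linarith
  -- rpow cancellation facts
  have hcan : ∀ z : ℝ, 0 < z → z ^ (-q) * z ^ q = 1 := by
    intro z hz
    rw [← Real.rpow_add hz]; norm_num
  have hcan' : ∀ z : ℝ, 0 < z → z ^ q * z ^ (-q) = 1 := by
    intro z hz
    rw [← Real.rpow_add hz]; norm_num
  have he3 : ∀ z : ℝ, 0 < z → z * z ^ (-q - 1) = z ^ (-q) := by
    intro z hz
    have h := (Real.rpow_add hz 1 (-q - 1)).symm
    rwa [Real.rpow_one, show (1 : ℝ) + (-q - 1) = -q by ring] at h
  have he4 : ∀ z : ℝ, 0 < z → z * z ^ (q - 1) = z ^ q := by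
    intro z hz
    have h := (Real.rpow_add hz 1 (q - 1)).symm
    rwa [Real.rpow_one, show (1 : ℝ) + (q - 1) = q by ring] at h
  -- derivative of φ
  have hφD : ∀ z : ℝ, 0 < z → HasDerivAt φ
      (p / 2 * (-(q * z ^ (-q - 1) * A z) - q * z ^ (q - 1) * B z + 2 * f z)) z := by
    intro z hz
    have h1 : HasDerivAt (fun w : ℝ => w ^ (-q)) (-q * z ^ (-q - 1)) z :=
      Real.hasDerivAt_rpow_const (Or.inl hz.ne')
    have h2 : HasDerivAt (fun w : ℝ => w ^ q) (q * z ^ (q - 1)) z :=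
      Real.hasDerivAt_rpow_const (Or.inl hz.ne')
    have hmain : HasDerivAt (fun w => p / 2 * (w ^ (-q) * A w - w ^ q * B w))
        (p / 2 * ((-q * z ^ (-q - 1)) * A z + z ^ (-q) * (z ^ q * f z)
          - ((q * z ^ (q - 1)) * B z + z ^ q * (-(z ^ (-q) * f z))))) z :=
      (((h1.mul (hAD z hz)).sub (h2.mul (hBD z hz)))).const_mul (p / 2)
    have hEq : φ =ᶠ[nhds z] fun w => p / 2 * (w ^ (-q) * A w - w ^ q * B w) := by
      filter_upwards [Ioi_mem_nhds hz] with w hw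
      exact hrepφ w hw
    have hres := hmain.congr_of_eventuallyEq hEq
    have e1 : z ^ (-q) * (z ^ q * f z) = f z := by
      rw [← mul_assoc, hcan z hz, one_mul]
    have e2 : z ^ q * (-(z ^ (-q) * f z)) = -f z := by
      rw [mul_neg, ← mul_assoc, hcan' z hz, one_mul]
    rw [e1, e2] at hres
    convert hres using 1
    · rfl
    · rfl
    · ring
  -- representation of χ on the domain
  have hSopen : IsOpen (Set.Ioo (0:ℝ) 1 ∪ Set.Ioi 1) := isOpen_Ioo.union isOpen_Ioi
  have hSpos : ∀ z ∈ Set.Ioo (0:ℝ) 1 ∪ Set.Ioi 1, 0 < z := by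
    rintro z (h | h)
    · exact h.1
    · exact lt_trans one_pos h
  have hSne : ∀ z ∈ Set.Ioo (0:ℝ) 1 ∪ Set.Ioi 1, z ^ 2 - 1 ≠ 0 := by
    rintro z (h | h)
    · exact ne_of_lt (by nlinarith [h.1, h.2])
    · have := Set.mem_Ioi.mp h
      exact ne_of_gt (by nlinarith)
  have hχrep : ∀ z ∈ Set.Ioo (0:ℝ) 1 ∪ Set.Ioi 1,
      χ z = -(p * q / 2) * (z ^ (-q) * A z + z ^ q * B z) := by
    intro z hzS
    have hz := hSpos z hzS
    have hne := hSne z hzS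
    have hfz : φ z / (z ^ 2 - 1) = f z := by
      rw [hφ]; exact mul_div_cancel_left₀ _ hne
    rw [hχ]
    simp only
    rw [(hφD z hz).deriv, mul_div_assoc, hfz]
    linear_combination (-(p * q / 2) * A z) * he3 z hz + (-(p * q / 2) * B z) * he4 z hz
  -- derivative of χ
  have hχD : ∀ z ∈ Set.Ioo (0:ℝ) 1 ∪ Set.Ioi 1, HasDerivAt χ
      (p * q ^ 2 / 2 * (z ^ (-q - 1) * A z - z ^ (q - 1) * B z)) z := by
    intro z hzS
    have hz := hSpos z hzS
    have h1 : HasDerivAt (fun w : ℝ => w ^ (-q)) (-q * z ^ (-q - 1)) z :=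
      Real.hasDerivAt_rpow_const (Or.inl hz.ne')
    have h2 : HasDerivAt (fun w : ℝ => w ^ q) (q * z ^ (q - 1)) z :=
      Real.hasDerivAt_rpow_const (Or.inl hz.ne')
    have hmain : HasDerivAt (fun w => -(p * q / 2) * (w ^ (-q) * A w + w ^ q * B w))
        (-(p * q / 2) * ((-q * z ^ (-q - 1)) * A z + z ^ (-q) * (z ^ q * f z)
          + ((q * z ^ (q - 1)) * B z + z ^ q * (-(z ^ (-q) * f z))))) z :=
      (((h1.mul (hAD z hz)).add (h2.mul (hBD z hz)))).const_mul (-(p * q / 2))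
    have hEq : χ =ᶠ[nhds z] fun w => -(p * q / 2) * (w ^ (-q) * A w + w ^ q * B w) := by
      filter_upwards [hSopen.mem_nhds hzS] with w hw
      exact hχrep w hw
    have hres := hmain.congr_of_eventuallyEq hEq
    have e1 : z ^ (-q) * (z ^ q * f z) = f z := by
      rw [← mul_assoc, hcan z hz, one_mul]
    have e2 : z ^ q * (-(z ^ (-q) * f z)) = -f z := by
      rw [mul_neg, ← mul_assoc, hcan' z hz, one_mul]
    rw [e1, e2] at hres
    convert hres using 1
    · rfl
    · rfl
    · ring
  -- conclusion
  intro z hzS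
  have hz := hSpos z hzS
  refine ⟨(hφD z hz).differentiableAt, (hχD z hzS).differentiableAt, ?_⟩
  rw [(hχD z hzS).deriv, hrepφ z hz]
  linear_combination (p * q ^ 2 / 2 * A z) * he3 z hz + (-(p * q ^ 2 / 2) * B z) * he4 z hz
end

section
/- Let p > 0 with p ≠ 2, let A be any real constant, and define, for z > 0, f(z) := (A/(p − 2)) · (1/z) · [ 1 − (1 + p·z + z²) / ( |z − 1|^{1 − p/2} · (z + 1)^{1 + p/2} ) ]. Then the function φ(z) := (z² − 1)·f(z) is twice differentiable on (0, 1) ∪ (1, ∞) and satisfies there the second-order linear differential equation z·(d/dz)[ z·( φ'(z) − p·φ(z)/(z² − 1) ) ] − q²·φ(z) = 0 with q = 1. -/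
open Real

noncomputable def tfun (p ε : ℝ) : ℝ → ℝ := fun z => ε * (ε * (z - 1) / (z + 1)) ^ (p / 2)

noncomputable def Efun (p A ε : ℝ) : ℝ → ℝ := fun z =>
  A / (p - 2) * ((z ^ 2 - 1) - (1 + p * z + z ^ 2) * tfun p ε z) / z

noncomputable def E1fun (p A ε : ℝ) : ℝ → ℝ := fun z =>
  A / (p - 2) * ((z ^ 2 + 1) -
    tfun p ε z * ((z ^ 2 - 1) ^ 2 + p * z * (1 + p * z + z ^ 2)) / (z ^ 2 - 1)) / z ^ 2

noncomputable def Ffun (p A ε : ℝ) : ℝ → ℝ := fun z =>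
  A / (p - 2) * (z + 1 / z - p - tfun p ε z * (z ^ 2 - 1) / z)

noncomputable def F1fun (p A ε : ℝ) : ℝ → ℝ := fun z =>
  A / (p - 2) * ((z ^ 2 - 1) - tfun p ε z * (1 + p * z + z ^ 2)) / z ^ 2

lemma tderiv (p ε z : ℝ) (hε : ε = 1 ∨ ε = -1) (hz1 : 0 < ε * (z - 1)) (hb : 0 < z + 1) :
    HasDerivAt (tfun p ε) (p * tfun p ε z / (z ^ 2 - 1)) z := by
  have hbne : z + 1 ≠ 0 := ne_of_gt hb
  have hg : 0 < ε * (z - 1) / (z + 1) := div_pos hz1 hb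
  have hane : ε * (z - 1) ≠ 0 := ne_of_gt hz1
  have hz1ne : z - 1 ≠ 0 := by rcases hε with rfl | rfl <;> intro h <;> rw [h] at hz1 <;> simp at hz1
  have hz2 : z ^ 2 - 1 ≠ 0 := by
    have : z ^ 2 - 1 = (z - 1) * (z + 1) := by ring
    rw [this]; exact mul_ne_zero hz1ne hbne
  have h1 : HasDerivAt (fun x : ℝ => ε * (x - 1)) ε z := by
    simpa using ((hasDerivAt_id z).sub_const 1).const_mul ε
  have h2 : HasDerivAt (fun x : ℝ => x + 1) 1 z := (hasDerivAt_id z).add_const 1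
  have hgd : HasDerivAt (fun x : ℝ => ε * (x - 1) / (x + 1))
      ((ε * (z + 1) - ε * (z - 1) * 1) / (z + 1) ^ 2) z := h1.div h2 hbne
  have hr := hgd.rpow_const (p := p / 2) (Or.inl (ne_of_gt hg))
  have hfinal := hr.const_mul ε
  convert (show HasDerivAt (tfun p ε) _ z from hfinal) using 1
  rw [Real.rpow_sub_one (ne_of_gt hg)]
  unfold tfun
  rw [div_div_eq_mul_div, div_eq_iff hz2]
  rcases hε with rfl | rfl
  · set t := ((1:ℝ) * (z - 1) / (z + 1)) ^ (p / 2) with htdef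
    field_simp [hane, hbne, hz2]
    ring
  · set t := ((-1:ℝ) * (z - 1) / (z + 1)) ^ (p / 2) with htdef
    field_simp [hane, hbne, hz2]
    have h1z : (1:ℝ) - z ≠ 0 := fun h => hz1ne (by linarith)
    ring

lemma Ederiv (p A ε z : ℝ) (hε : ε = 1 ∨ ε = -1) (hz : z ≠ 0)
    (hz1 : 0 < ε * (z - 1)) (hb : 0 < z + 1) :
    HasDerivAt (Efun p A ε) (E1fun p A ε z) z := by
  have hbne : z + 1 ≠ 0 := ne_of_gt hb
  have hz1ne : z - 1 ≠ 0 := by rcases hε with rfl | rfl <;> intro h <;> rw [h] at hz1 <;> simp at hz1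
  have hz2 : z ^ 2 - 1 ≠ 0 := by
    have : z ^ 2 - 1 = (z - 1) * (z + 1) := by ring
    rw [this]; exact mul_ne_zero hz1ne hbne
  have ht := tderiv p ε z hε hz1 hb
  have hN : HasDerivAt (fun x : ℝ => 1 + p * x + x ^ 2) (p + 2 * z) z := by
    have := (((hasDerivAt_id z).const_mul p).const_add 1).add (hasDerivAt_pow 2 z)
    convert (show HasDerivAt (fun x : ℝ => 1 + p * x + x ^ 2) _ z from this) using 1 <;> simp <;> ring
  have hsq : HasDerivAt (fun x : ℝ => x ^ 2 - 1) (2 * z) z := by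
    have := (hasDerivAt_pow 2 z).sub_const 1
    convert (show HasDerivAt (fun x : ℝ => x ^ 2 - 1) _ z from this) using 1; simp
  have hnum : HasDerivAt (fun x : ℝ => (x ^ 2 - 1) - (1 + p * x + x ^ 2) * tfun p ε x)
      (2 * z - ((p + 2 * z) * tfun p ε z + (1 + p * z + z ^ 2) * (p * tfun p ε z / (z ^ 2 - 1)))) z :=
    hsq.sub (hN.mul ht)
  have hfull := (hnum.const_mul (A / (p - 2))).div (hasDerivAt_id z) hz
  convert (show HasDerivAt (Efun p A ε) _ z from hfull) using 1
  unfold E1fun tfun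
  set t := (ε * (z - 1) / (z + 1)) ^ (p / 2) with htdef
  set c := A / (p - 2) with hcdef
  simp only [id]
  field_simp [hz, hbne, hz2]
  ring

lemma Fderiv (p A ε z : ℝ) (hε : ε = 1 ∨ ε = -1) (hz : z ≠ 0)
    (hz1 : 0 < ε * (z - 1)) (hb : 0 < z + 1) :
    HasDerivAt (Ffun p A ε) (F1fun p A ε z) z := by
  have hbne : z + 1 ≠ 0 := ne_of_gt hb
  have hz1ne : z - 1 ≠ 0 := by rcases hε with rfl | rfl <;> intro h <;> rw [h] at hz1 <;> simp at hz1
  have hz2 : z ^ 2 - 1 ≠ 0 := by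
    have : z ^ 2 - 1 = (z - 1) * (z + 1) := by ring
    rw [this]; exact mul_ne_zero hz1ne hbne
  have ht := tderiv p ε z hε hz1 hb
  have hsq : HasDerivAt (fun x : ℝ => x ^ 2 - 1) (2 * z) z := by
    have := (hasDerivAt_pow 2 z).sub_const 1
    convert (show HasDerivAt (fun x : ℝ => x ^ 2 - 1) _ z from this) using 1; simp
  have hinv : HasDerivAt (fun x : ℝ => 1 / x) ((0 * z - 1 * 1) / z ^ 2) z :=
    (hasDerivAt_const z 1).div (hasDerivAt_id z) hz
  have h2 : HasDerivAt (fun x : ℝ => tfun p ε x * (x ^ 2 - 1) / x)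
      (((p * tfun p ε z / (z ^ 2 - 1) * (z ^ 2 - 1) + tfun p ε z * (2 * z)) * z
        - tfun p ε z * (z ^ 2 - 1) * 1) / z ^ 2 : ℝ) z := (ht.mul hsq).div (hasDerivAt_id z) hz
  have hfull := ((((hasDerivAt_id z).add hinv).sub_const p).sub h2).const_mul (A / (p - 2))
  convert (show HasDerivAt (Ffun p A ε) _ z from hfull) using 1
  unfold F1fun tfun
  set t := (ε * (z - 1) / (z + 1)) ^ (p / 2) with htdef
  set c := A / (p - 2) with hcdef
  field_simp [hz, hbne, hz2]
  ring

lemma claim1 (p ε x : ℝ) (hε : ε = 1 ∨ ε = -1) (hx : 0 < x) (hx1 : 0 < ε * (x - 1)) :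
    (x ^ 2 - 1) / (|x - 1| ^ (1 - p / 2) * (x + 1) ^ (1 + p / 2)) = tfun p ε x := by
  have hb : 0 < x + 1 := by linarith
  have habs : |x - 1| = ε * (x - 1) := by
    rcases hε with rfl | rfl
    · rw [abs_of_pos (by linarith [hx1] : (0:ℝ) < x - 1)]; ring
    · rw [abs_of_neg (by nlinarith [hx1] : x - 1 < 0)]; ring
  set a := ε * (x - 1) with ha_def
  have ha : 0 < a := hx1
  have hx2 : x ^ 2 - 1 = ε * (a * (x + 1)) := by
    rcases hε with rfl | rfl <;> simp only [ha_def] <;> ring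
  rw [habs, hx2]
  unfold tfun
  rw [Real.div_rpow ha.le hb.le]
  have hus : a ^ (1 - p / 2) * a ^ (p / 2) = a := by
    rw [← Real.rpow_add ha]; norm_num
  have hvv : (x + 1) ^ ((1:ℝ) + p / 2) = (x + 1) * (x + 1) ^ (p / 2) := by
    rw [Real.rpow_add hb, Real.rpow_one]
  rw [hvv]
  have hu : a ^ (1 - p / 2) ≠ 0 := ne_of_gt (Real.rpow_pos_of_pos ha _)
  have hv : (x + 1) ^ (p / 2) ≠ 0 := ne_of_gt (Real.rpow_pos_of_pos hb _)
  have hbne : x + 1 ≠ 0 := ne_of_gt hb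
  have hden : a ^ (1 - p / 2) * ((x + 1) * (x + 1) ^ (p / 2)) ≠ 0 :=
    mul_ne_zero hu (mul_ne_zero hbne hv)
  rw [← mul_div_assoc, div_eq_div_iff hden hv]
  linear_combination (-(ε * (x + 1) * (x + 1) ^ (p / 2))) * hus

lemma mainlem (p A ε : ℝ) (hε : ε = 1 ∨ ε = -1) (φ χ : ℝ → ℝ)
    (hφE : ∀ x : ℝ, 0 < x → 0 < ε * (x - 1) → φ x = Efun p A ε x)
    (hχ : χ = fun x => x * (deriv φ x - p * φ x / (x ^ 2 - 1)))
    (z : ℝ) (hz : 0 < z) (hz1 : 0 < ε * (z - 1)) :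
    DifferentiableAt ℝ φ z ∧ DifferentiableAt ℝ χ z ∧ z * deriv χ z - φ z = 0 := by
  set U := {x : ℝ | 0 < x ∧ 0 < ε * (x - 1)} with hU_def
  have hU : IsOpen U := by
    have h1 : IsOpen {x : ℝ | 0 < x} := isOpen_lt continuous_const continuous_id
    have h2 : IsOpen {x : ℝ | 0 < ε * (x - 1)} :=
      isOpen_lt continuous_const (continuous_const.mul (continuous_id.sub continuous_const))
    exact h1.inter h2
  have hmemU : z ∈ U := ⟨hz, hz1⟩
  have heq : ∀ x ∈ U, φ =ᶠ[nhds x] Efun p A ε := by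
    intro x hx
    filter_upwards [hU.mem_nhds hx] with y hy using hφE y hy.1 hy.2
  have hdφ : ∀ x ∈ U, HasDerivAt φ (E1fun p A ε x) x := by
    intro x hx
    exact (Ederiv p A ε x hε (ne_of_gt hx.1) hx.2 (by linarith [hx.1])).congr_of_eventuallyEq
      (heq x hx)
  have hderivφ : ∀ x ∈ U, deriv φ x = E1fun p A ε x := fun x hx => (hdφ x hx).deriv
  have hχF : ∀ x ∈ U, χ x = Ffun p A ε x := by
    intro x hx
    have hxne : x ≠ 0 := ne_of_gt hx.1
    have hbne : x + 1 ≠ 0 := by linarith [hx.1]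
    have h2x : 0 < ε * (x - 1) := hx.2
    have hx1ne : x - 1 ≠ 0 := by
      intro h; rw [h, mul_zero] at h2x; exact lt_irrefl 0 h2x
    have hx2 : x ^ 2 - 1 ≠ 0 := by
      have : x ^ 2 - 1 = (x - 1) * (x + 1) := by ring
      rw [this]; exact mul_ne_zero hx1ne hbne
    rw [hχ]
    simp only
    rw [hderivφ x hx, hφE x hx.1 hx.2]
    unfold E1fun Efun Ffun tfun
    set t := (ε * (x - 1) / (x + 1)) ^ (p / 2) with htdef
    set c := A / (p - 2) with hcdef
    field_simp [hxne, hbne, hx2]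
    ring
  have heqχ : χ =ᶠ[nhds z] Ffun p A ε := by
    filter_upwards [hU.mem_nhds hmemU] with y hy using hχF y hy
  have hdχ : HasDerivAt χ (F1fun p A ε z) z :=
    (Fderiv p A ε z hε (ne_of_gt hz) hz1 (by linarith)).congr_of_eventuallyEq heqχ
  refine ⟨(hdφ z hmemU).differentiableAt, hdχ.differentiableAt, ?_⟩
  rw [hdχ.deriv, hφE z hz hz1]
  have hzne : z ≠ 0 := ne_of_gt hz
  unfold F1fun Efun tfun
  set t := (ε * (z - 1) / (z + 1)) ^ (p / 2) with htdef
  set c := A / (p - 2) with hcdef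
  field_simp [hzne]
  ring

/-- **The explicit `q = 1` stationary density solves the differential equation.**
For `p > 0`, `p ≠ 2` and any constant `A`, the function
`f(z) = (A/(p-2)) (1/z) [1 - (1+pz+z²)/(|z-1|^{1-p/2} (z+1)^{1+p/2})]`
yields `φ(z) := (z²-1) f(z)` which is twice differentiable on `(0,1) ∪ (1,∞)`
and satisfies `z (d/dz)[ z (φ' - p φ/(z²-1)) ] - 1² φ = 0` there (the case `q = 1`). -/
theorem explicit_density_solves_ode_q_one
    (p A : ℝ) (hp : 0 < p) (hp2 : p ≠ 2) (f : ℝ → ℝ)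
    (hf : ∀ z : ℝ, 0 < z → f z =
      A / (p - 2) * (1 / z) *
        (1 - (1 + p * z + z ^ 2) /
          (|z - 1| ^ (1 - p / 2) * (z + 1) ^ (1 + p / 2))))
    (φ χ : ℝ → ℝ)
    (hφ : φ = fun z => (z ^ 2 - 1) * f z)
    (hχ : χ = fun z => z * (deriv φ z - p * φ z / (z ^ 2 - 1))) :
    ∀ z ∈ Set.Ioo (0:ℝ) 1 ∪ Set.Ioi 1,
      DifferentiableAt ℝ φ z ∧ DifferentiableAt ℝ χ z ∧
        z * deriv χ z - 1 ^ 2 * φ z = 0 := by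
  have hφE : ∀ ε : ℝ, ε = 1 ∨ ε = -1 →
      ∀ x : ℝ, 0 < x → 0 < ε * (x - 1) → φ x = Efun p A ε x := by
    intro ε hε x hx hx1
    simp only [hφ]
    rw [hf x hx]
    have h1 := claim1 p ε x hε hx hx1
    unfold Efun
    rw [← h1]
    have hbne : x + 1 ≠ 0 := by positivity
    have hxne : x ≠ 0 := ne_of_gt hx
    have hx1ne : x - 1 ≠ 0 := fun h => by rw [h, mul_zero] at hx1; exact lt_irrefl 0 hx1
    have hu : |x - 1| ^ (1 - p / 2) ≠ 0 :=
      (Real.rpow_pos_of_pos (abs_pos.mpr hx1ne) _).ne'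
    have hv : (x + 1) ^ (1 + p / 2) ≠ 0 :=
      (Real.rpow_pos_of_pos (by linarith) _).ne'
    field_simp
  intro z hz
  rcases hz with ⟨h0, h1⟩ | hz
  · have := mainlem p A (-1) (Or.inr rfl) φ χ (hφE (-1) (Or.inr rfl)) hχ z h0
      (by nlinarith)
    simpa using this
  · rw [Set.mem_Ioi] at hz
    have h0 : 0 < z := lt_trans one_pos hz
    have := mainlem p A 1 (Or.inl rfl) φ χ (hφE 1 (Or.inl rfl)) hχ z h0
      (by linarith)
    simpa using this
end

section
/- ∫_0^∞ [ (1/(2z)) · ln( (z + 1)/|z − 1| ) − 1/(z + 1)² ] dz = π²/4 − 1. -/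
open MeasureTheory Real Set Filter Topology

noncomputable def Lfun : ℝ → ℝ := fun z => (1 / (2 * z)) * Real.log ((z + 1) / |z - 1|)

lemma hasSum_odd_sq : HasSum (fun k : ℕ => (1:ℝ) / (2*(k:ℝ)+1)^2) (π^2/8) := by
  have hz := hasSum_zeta_two
  set f : ℕ → ℝ := fun n => 1 / (n:ℝ)^2 with hf
  have heven : HasSum (fun k => f (2*k)) (π^2/24) := by
    have h4 := hz.mul_left (1/4)
    have : (fun k : ℕ => f (2*k)) = fun k : ℕ => (1:ℝ)/4 * (1/(k:ℝ)^2) := by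
      funext k
      simp only [hf]
      push_cast
      rw [show ((2:ℝ)*k)^2 = 4*(k:ℝ)^2 by ring, mul_one_div, div_div]
    rw [this, show π^2/24 = 1/4*(π^2/6) by ring]
    exact h4
  have hinj : Function.Injective (fun k : ℕ => 2*k+1) := by intro a b h; simp only at h; omega
  have hsummodd : Summable (fun k : ℕ => f (2*k+1)) := hz.summable.comp_injective hinj
  have hodd := hsummodd.hasSum
  have htot := heven.even_add_odd hodd
  have heq : π^2/24 + ∑' k : ℕ, f (2*k+1) = π^2/6 := htot.unique hz
  have hS : ∑' k : ℕ, f (2*k+1) = π^2/8 := by linarith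
  rw [hS] at hodd
  convert hodd using 2 with k
  simp only [hf]
  push_cast
  ring

lemma measurable_Lfun : Measurable Lfun := by
  unfold Lfun
  exact (measurable_const.div (measurable_const.mul measurable_id)).mul
    (Real.measurable_log.comp ((measurable_id.add_const 1).div
      ((measurable_id.sub_const 1).abs)))

lemma hasSum_Lfun {z : ℝ} (hz : z ∈ Ioo (0:ℝ) 1) :
    HasSum (fun k : ℕ => z ^ (2*k) / (2*(k:ℝ)+1)) (Lfun z) := by
  obtain ⟨h0, h1⟩ := hz
  have habs : |z| < 1 := abs_lt.2 ⟨by linarith, h1⟩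
  have h := (hasSum_log_sub_log_of_abs_lt_one habs).div_const (2*z)
  have hfun : (fun k : ℕ => (2:ℝ) * (1/(2*(k:ℝ)+1)) * z^(2*k+1) / (2*z))
      = fun k : ℕ => z^(2*k) / (2*(k:ℝ)+1) := by
    funext k
    have hk : (2*(k:ℝ)+1) ≠ 0 := by positivity
    rw [pow_succ]
    field_simp
  have hval : (Real.log (1+z) - Real.log (1-z)) / (2*z) = Lfun z := by
    unfold Lfun
    rw [show |z - 1| = 1 - z by rw [abs_of_neg (by linarith)]; ring,
      Real.log_div (by linarith) (by linarith), show (1:ℝ)+z = z+1 by ring]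
    ring
  rw [hfun, hval] at h
  exact h

lemma lfun_nonneg {z : ℝ} (hz : 0 < z) : 0 ≤ Lfun z := by
  rcases eq_or_ne z 1 with rfl | hne
  · unfold Lfun; norm_num
  · unfold Lfun
    apply mul_nonneg (by positivity)
    apply Real.log_nonneg
    rw [le_div_iff₀ (abs_pos.2 (sub_ne_zero.2 hne)), one_mul]
    cases' abs_cases (z - 1) with h h <;> rw [h.1] <;> linarith

lemma integrableOn_neg_log : IntegrableOn (fun z : ℝ => -Real.log (1 - z)) (Ioc 0 1) := by
  have hcont : ContinuousOn (fun z : ℝ => (1-z) * Real.log (1-z) - (1-z)) (Icc 0 1) := by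
    apply ContinuousOn.sub _ (by fun_prop)
    exact (Real.continuous_mul_log.comp (continuous_const.sub continuous_id)).continuousOn
  have hderiv : ∀ x ∈ Ioo (0:ℝ) 1,
      HasDerivAt (fun z : ℝ => (1-z) * Real.log (1-z) - (1-z)) (-Real.log (1-x)) x := by
    intro x hx
    have h1x : (1:ℝ) - x ≠ 0 := by rw [sub_ne_zero]; exact fun h => absurd h.symm (ne_of_lt hx.2)
    have hone : HasDerivAt (fun z : ℝ => 1 - z) (-1) x := by
      simpa using (hasDerivAt_id x).const_sub 1
    have hlog : HasDerivAt (fun z : ℝ => Real.log (1-z)) (-1/(1-x)) x := hone.log h1x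
    have := (hone.mul hlog).sub hone
    refine this.congr_deriv ?_
    field_simp
    ring
  have hpos : ∀ x ∈ Ioo (0:ℝ) 1, 0 ≤ -Real.log (1-x) := by
    intro x hx
    simp only [neg_nonneg]
    exact Real.log_nonpos (by linarith [hx.2]) (by linarith [hx.1])
  exact intervalIntegral.integrableOn_deriv_of_nonneg hcont hderiv hpos

lemma integrableOn_Lfun_Ioo : IntegrableOn Lfun (Ioo 0 1) := by
  have hdom : IntegrableOn (fun z : ℝ => 3/2 + -Real.log (1 - z)) (Ioo 0 1) := by
    apply Integrable.add
    · exact integrableOn_const (by simp [Real.volume_Ioo])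
    · exact integrableOn_neg_log.mono_set Ioo_subset_Ioc_self
  have goal : Integrable Lfun (volume.restrict (Ioo 0 1)) := by
    apply Integrable.mono hdom measurable_Lfun.aestronglyMeasurable.restrict
    rw [ae_restrict_iff' measurableSet_Ioo]
    filter_upwards with z hz
    obtain ⟨h0, h1⟩ := hz
    have h1z : (0:ℝ) < 1 - z := by linarith
    have hlog1 : Real.log (1 + z) ≤ z := by
      have := Real.log_le_sub_one_of_pos (show (0:ℝ) < 1 + z by linarith)
      linarith
    have hlogneg : 0 ≤ -Real.log (1-z) :=
      neg_nonneg.2 (Real.log_nonpos (by linarith) (by linarith))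
    have hL : Lfun z = Real.log (1+z) / (2*z) + (-Real.log (1-z)) / (2*z) := by
      unfold Lfun
      rw [show |z - 1| = 1 - z by rw [abs_of_neg (by linarith)]; ring,
        Real.log_div (by linarith) (by linarith), show (z:ℝ)+1 = 1+z by ring]
      ring
    have hA : Real.log (1+z) / (2*z) ≤ 1/2 := by
      rw [div_le_iff₀ (by linarith)]
      linarith
    have hB : (-Real.log (1-z)) / (2*z) ≤ 1 + -Real.log (1-z) := by
      rcases le_or_gt (1/2 : ℝ) z with hc | hc
      · have : (-Real.log (1-z)) / (2*z) ≤ -Real.log (1-z) := by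
          apply div_le_self hlogneg
          linarith
        linarith
      · have hle : -Real.log (1-z) ≤ 2*z := by
          have h := Real.log_le_sub_one_of_pos (show (0:ℝ) < (1-z)⁻¹ by positivity)
          rw [Real.log_inv] at h
          have : (1-z)⁻¹ - 1 = z / (1-z) := by field_simp; ring
          rw [this] at h
          have : z / (1-z) ≤ 2*z := by
            rw [div_le_iff₀ h1z]
            nlinarith
          linarith
        have : (-Real.log (1-z)) / (2*z) ≤ 1 := by
          rw [div_le_one (by linarith)]
          linarith
        linarith
    rw [Real.norm_of_nonneg (lfun_nonneg h0),
      Real.norm_of_nonneg (by linarith : (0:ℝ) ≤ 3/2 + -Real.log (1-z))]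
    rw [hL]
    linarith
  exact goal

lemma integral_Lfun_Ioo : ∫ z in Ioo (0:ℝ) 1, Lfun z = π^2/8 := by
  have hFint : ∀ k : ℕ, Integrable (fun z : ℝ => z ^ (2*k) / (2*(k:ℝ)+1))
      (volume.restrict (Ioo 0 1)) := by
    intro k
    have : Continuous (fun z : ℝ => z ^ (2*k) / (2*(k:ℝ)+1)) := by fun_prop
    exact (this.integrableOn_Ioc).mono_set Ioo_subset_Ioc_self
  have hval : ∀ k : ℕ, ∫ z in Ioo (0:ℝ) 1, z ^ (2*k) / (2*(k:ℝ)+1) = 1 / (2*(k:ℝ)+1)^2 := by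
    intro k
    rw [← integral_Ioc_eq_integral_Ioo, ← intervalIntegral.integral_of_le zero_le_one,
      intervalIntegral.integral_div, integral_pow, one_pow, zero_pow (by omega)]
    push_cast
    rw [div_div, sub_zero, ← pow_two]
  have hnorm : ∀ k : ℕ, ∫ z in Ioo (0:ℝ) 1, ‖z ^ (2*k) / (2*(k:ℝ)+1)‖ = 1 / (2*(k:ℝ)+1)^2 := by
    intro k
    rw [← hval k]
    apply setIntegral_congr_fun measurableSet_Ioo
    intro z hz
    exact Real.norm_of_nonneg (div_nonneg (pow_nonneg hz.1.le _) (by positivity))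
  have hsum : Summable (fun k : ℕ => ∫ z in Ioo (0:ℝ) 1, ‖z ^ (2*k) / (2*(k:ℝ)+1)‖) := by
    apply Summable.congr hasSum_odd_sq.summable
    intro k
    exact (hnorm k).symm
  have h := integral_tsum_of_summable_integral_norm hFint hsum
  have htsum : ∫ z in Ioo (0:ℝ) 1, (∑' k : ℕ, z ^ (2*k) / (2*(k:ℝ)+1))
      = ∫ z in Ioo (0:ℝ) 1, Lfun z := by
    apply setIntegral_congr_fun measurableSet_Ioo
    intro z hz
    exact (hasSum_Lfun hz).tsum_eq
  rw [htsum] at h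
  rw [← h]
  have : ∀ k : ℕ, ∫ z in Ioo (0:ℝ) 1, z ^ (2*k) / (2*(k:ℝ)+1) = (1:ℝ)/(2*(k:ℝ)+1)^2 := hval
  rw [tsum_congr this]
  exact hasSum_odd_sq.tsum_eq

lemma image_inv_Ioo : (fun u : ℝ => u⁻¹) '' Ioo 0 1 = Ioi 1 := by
  ext y
  constructor
  · rintro ⟨u, ⟨h0, h1⟩, rfl⟩
    exact (one_lt_inv₀ h0).2 h1
  · intro hy
    have hy1 : (1:ℝ) < y := hy
    exact ⟨y⁻¹, ⟨by positivity, (inv_lt_one₀ (by linarith)).2 hy1⟩, by simp⟩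

lemma Lfun_inv_eq {u : ℝ} (hu : u ∈ Ioo (0:ℝ) 1) : |(-(u^2)⁻¹)| • Lfun u⁻¹ = Lfun u := by
  obtain ⟨h0, h1⟩ := hu
  have hu0 : u ≠ 0 := ne_of_gt h0
  have hinv1 : (1:ℝ) < u⁻¹ := (one_lt_inv₀ h0).2 h1
  have habs1 : |u⁻¹ - 1| = u⁻¹ - 1 := abs_of_pos (by linarith)
  have habs2 : |u - 1| = 1 - u := by rw [abs_of_neg (by linarith)]; ring
  have h1u : (1:ℝ) - u ≠ 0 := by intro h; exact absurd (by linarith : u = 1) (ne_of_lt h1)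
  have harg : (u⁻¹ + 1)/(u⁻¹ - 1) = (u + 1)/(1 - u) := by
    rw [div_eq_div_iff (by linarith) (by linarith)]
    field_simp
    ring
  unfold Lfun
  rw [habs1, habs2, harg, abs_neg, abs_of_pos (by positivity : (0:ℝ) < ((u^2)⁻¹)),
    smul_eq_mul]
  field_simp

lemma hasderiv_inv : ∀ u ∈ Ioo (0:ℝ) 1,
    HasDerivWithinAt (fun u : ℝ => u⁻¹) (-(u^2)⁻¹) (Ioo 0 1) u := fun u hu =>
  (hasDerivAt_inv (ne_of_gt hu.1)).hasDerivWithinAt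

lemma injOn_inv : InjOn (fun u : ℝ => u⁻¹) (Ioo 0 1) := fun a _ b _ h => inv_injective h

lemma integral_Lfun_Ioi : ∫ z in Ioi (1:ℝ), Lfun z = π^2/8 := by
  rw [← image_inv_Ioo,
    integral_image_eq_integral_abs_deriv_smul measurableSet_Ioo hasderiv_inv injOn_inv]
  rw [setIntegral_congr_fun measurableSet_Ioo (fun u hu => Lfun_inv_eq hu)]
  exact integral_Lfun_Ioo

lemma integrableOn_Lfun_Ioi : IntegrableOn Lfun (Ioi 1) := by
  rw [← image_inv_Ioo,
    integrableOn_image_iff_integrableOn_abs_deriv_smul measurableSet_Ioo hasderiv_inv injOn_inv]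
  exact integrableOn_Lfun_Ioo.congr_fun (fun u hu => (Lfun_inv_eq hu).symm) measurableSet_Ioo

lemma union_ae : (Ioo (0:ℝ) 1 ∪ Ioi 1 : Set ℝ) =ᵐ[volume] Ioi (0:ℝ) := by
  have h1 : Ioo (0:ℝ) 1 ∪ Ici 1 = Ioi 0 := Ioo_union_Ici_eq_Ioi zero_lt_one
  have h2 : (Ioo (0:ℝ) 1 ∪ Ioi 1 : Set ℝ) =ᵐ[volume] (Ioo (0:ℝ) 1 ∪ Ici 1 : Set ℝ) :=
    EventuallyEq.union (ae_eq_refl _) Ioi_ae_eq_Ici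
  rw [h1] at h2
  exact h2

lemma disj : Disjoint (Ioo (0:ℝ) 1) (Ioi 1) :=
  Set.disjoint_left.mpr (fun x hx hx' => absurd hx.2 (not_lt.mpr hx'.le))

lemma integrableOn_Lfun_Ioi0 : IntegrableOn Lfun (Ioi 0) := by
  rw [IntegrableOn, ← Measure.restrict_congr_set union_ae]
  exact integrableOn_Lfun_Ioo.union integrableOn_Lfun_Ioi

lemma integral_Lfun_Ioi0 : ∫ z in Ioi (0:ℝ), Lfun z = π^2/4 := by
  rw [← setIntegral_congr_set union_ae,
    setIntegral_union disj measurableSet_Ioi integrableOn_Lfun_Ioo integrableOn_Lfun_Ioi,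
    integral_Lfun_Ioo, integral_Lfun_Ioi]
  ring

lemma hasDerivAt_R : ∀ x ∈ Ici (0:ℝ), HasDerivAt (fun z : ℝ => -(z+1)⁻¹) (1/(x+1)^2) x := by
  intro x hx
  have hne : (x:ℝ)+1 ≠ 0 := by have : (0:ℝ) ≤ x := hx; positivity
  have h := (((hasDerivAt_id x).add_const 1).inv hne).neg
  refine h.congr_deriv ?_
  field_simp
  simp only [id_eq]
  exact div_self (pow_ne_zero 2 hne)

lemma tendsto_R : Tendsto (fun z : ℝ => -(z+1)⁻¹) atTop (𝓝 0) := by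
  have : Tendsto (fun z : ℝ => (z+1)⁻¹) atTop (𝓝 0) :=
    tendsto_inv_atTop_zero.comp (tendsto_atTop_add_const_right _ 1 tendsto_id)
  simpa using this.neg

lemma R_nonneg : ∀ x ∈ Ioi (0:ℝ), 0 ≤ 1/(x+1)^2 := fun x _ => by positivity

lemma integrableOn_R : IntegrableOn (fun z : ℝ => 1/(z+1)^2) (Ioi 0) :=
  integrableOn_Ioi_deriv_of_nonneg' hasDerivAt_R R_nonneg tendsto_R

lemma integral_R : ∫ z in Ioi (0:ℝ), 1/(z+1)^2 = 1 := by
  rw [integral_Ioi_of_hasDerivAt_of_nonneg' hasDerivAt_R R_nonneg tendsto_R]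
  norm_num

/-- **Normalisation integral at `p = 2`, `q = 1`:**
`∫_0^∞ [ (1/(2z)) ln((z+1)/|z-1|) - 1/(z+1)² ] dz = π²/4 - 1`. -/
theorem normalisation_integral_p_two :
    ∫ z in Set.Ioi (0:ℝ),
        ((1 / (2 * z)) * Real.log ((z + 1) / |z - 1|) - 1 / (z + 1) ^ 2) =
      Real.pi ^ 2 / 4 - 1 := by
  have : ∫ z in Set.Ioi (0:ℝ),
      ((1 / (2 * z)) * Real.log ((z + 1) / |z - 1|) - 1 / (z + 1) ^ 2)
      = ∫ z in Set.Ioi (0:ℝ), (Lfun z - 1/(z+1)^2) := rfl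
  rw [this, integral_sub integrableOn_Lfun_Ioi0 integrableOn_R,
    integral_Lfun_Ioi0, integral_R]
end

section
/- Define, for z > 0, f(z) := (1/(2z)) · ln( (z + 1)/|z − 1| ) − 1/(z + 1)². Then the function φ(z) := (z² − 1)·f(z) is twice differentiable on (0, 1) ∪ (1, ∞) and satisfies there the second-order linear differential equation z·(d/dz)[ z·( φ'(z) − p·φ(z)/(z² − 1) ) ] − q²·φ(z) = 0 with p = 2 and q = 1. -/
open Real Filter

private lemma hasDerivAt_L (z : ℝ) (h1 : z + 1 ≠ 0) (h2 : z - 1 ≠ 0) :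
    HasDerivAt (fun w : ℝ => Real.log (w + 1) - Real.log (w - 1))
      (1 / (z + 1) - 1 / (z - 1)) z := by
  have hA : HasDerivAt (fun w : ℝ => Real.log (w + 1)) (1 / (z + 1)) z := by
    have := (Real.hasDerivAt_log h1).comp z ((hasDerivAt_id z).add_const 1)
    simpa [Function.comp_def] using this
  have hB : HasDerivAt (fun w : ℝ => Real.log (w - 1)) (1 / (z - 1)) z := by
    have := (Real.hasDerivAt_log h2).comp z ((hasDerivAt_id z).sub_const 1)
    simpa [Function.comp_def] using this
  exact hA.sub hB

private lemma hasDerivAt_Phi (z : ℝ) (hz0 : (0:ℝ) < z) (hz1 : z ≠ 1) :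
    HasDerivAt (fun w : ℝ =>
        (w ^ 2 - 1) * ((1 / (2 * w)) * (Real.log (w + 1) - Real.log (w - 1))
          - 1 / (w + 1) ^ 2))
      (((z ^ 2 + 1) / (2 * z ^ 2)) * (Real.log (z + 1) - Real.log (z - 1))
        - 1 / z - 2 / (z + 1) ^ 2) z := by
  have hz : z ≠ 0 := ne_of_gt hz0
  have h1 : z + 1 ≠ 0 := by positivity
  have h2 : z - 1 ≠ 0 := sub_ne_zero.mpr hz1
  have hL := hasDerivAt_L z h1 h2
  have hinv : HasDerivAt (fun w : ℝ => 1 / (2 * w)) (-(2) / (2 * z) ^ 2) z := by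
    have := (hasDerivAt_const z (1:ℝ)).fun_div ((hasDerivAt_id z).const_mul 2)
      (by simpa using mul_ne_zero two_ne_zero hz)
    simpa using this
  have hsq : HasDerivAt (fun w : ℝ => 1 / (w + 1) ^ 2) (-(2 * (z + 1)) / ((z + 1) ^ 2) ^ 2) z := by
    have hb : HasDerivAt (fun w : ℝ => (w + 1) ^ 2) (2 * (z + 1)) z := by
      have := ((hasDerivAt_id z).add_const 1).fun_pow 2
      simpa [mul_comm] using this
    have := (hasDerivAt_const z (1:ℝ)).fun_div hb (pow_ne_zero 2 h1)
    simpa using this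
  have hfront : HasDerivAt (fun w : ℝ => w ^ 2 - 1) (2 * z) z := by
    have := (hasDerivAt_pow 2 z).sub_const 1
    simpa using this
  have hmain := hfront.fun_mul ((hinv.fun_mul hL).fun_sub hsq)
  refine hmain.congr_deriv ?_
  have h3 : z ^ 2 - 1 ≠ 0 := by
    intro h
    have : (z - 1) * (z + 1) = 0 := by ring_nf; linarith [h]
    rcases mul_eq_zero.mp this with h' | h' <;> [exact h2 h'; exact h1 h']
  have hL2 : 1 / (z + 1) - 1 / (z - 1) = -2 / (z ^ 2 - 1) := by
    field_simp
    ring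
  rw [hL2]
  field_simp
  ring

private lemma hasDerivAt_X2 (z : ℝ) (hz0 : (0:ℝ) < z) (hz1 : z ≠ 1) :
    HasDerivAt (fun w : ℝ =>
        ((w - 1) ^ 2 / (2 * w)) * (Real.log (w + 1) - Real.log (w - 1)) - 1)
      (((z ^ 2 - 1) / (2 * z ^ 2)) * (Real.log (z + 1) - Real.log (z - 1))
        - (z - 1) / (z * (z + 1))) z := by
  have hz : z ≠ 0 := ne_of_gt hz0
  have h1 : z + 1 ≠ 0 := by positivity
  have h2 : z - 1 ≠ 0 := sub_ne_zero.mpr hz1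
  have hL := hasDerivAt_L z h1 h2
  have hq : HasDerivAt (fun w : ℝ => (w - 1) ^ 2 / (2 * w))
      ((2 * (z - 1) * (2 * z) - (z - 1) ^ 2 * 2) / (2 * z) ^ 2) z := by
    have ha : HasDerivAt (fun w : ℝ => (w - 1) ^ 2) (2 * (z - 1)) z := by
      have := ((hasDerivAt_id z).sub_const 1).fun_pow 2
      simpa [mul_comm] using this
    have hb : HasDerivAt (fun w : ℝ => 2 * w) 2 z := by
      simpa using (hasDerivAt_id z).const_mul 2
    exact ha.div hb (by simpa using mul_ne_zero two_ne_zero hz)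
  have hmain := (hq.fun_mul hL).sub_const 1
  refine hmain.congr_deriv ?_
  have h3 : z ^ 2 - 1 ≠ 0 := by
    intro h
    have : (z - 1) * (z + 1) = 0 := by ring_nf; linarith [h]
    rcases mul_eq_zero.mp this with h' | h' <;> [exact h2 h'; exact h1 h']
  have hL2 : 1 / (z + 1) - 1 / (z - 1) = -2 / (z ^ 2 - 1) := by
    field_simp
    ring
  rw [hL2]
  field_simp
  ring

/-- **The `p = 2`, `q = 1` stationary density solves the differential equation.**
With `f(z) = (1/(2z)) ln((z+1)/|z-1|) - 1/(z+1)²`, the function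
`φ(z) := (z²-1) f(z)` is twice differentiable on `(0,1) ∪ (1,∞)` and satisfies
`z (d/dz)[ z (φ' - 2 φ/(z²-1)) ] - 1² φ = 0` there (the case `p = 2`, `q = 1`). -/
theorem explicit_density_solves_ode_p_two_q_one
    (f : ℝ → ℝ)
    (hf : ∀ z : ℝ, 0 < z → f z =
      (1 / (2 * z)) * Real.log ((z + 1) / |z - 1|) - 1 / (z + 1) ^ 2)
    (φ χ : ℝ → ℝ)
    (hφ : φ = fun z => (z ^ 2 - 1) * f z)
    (hχ : χ = fun z => z * (deriv φ z - 2 * φ z / (z ^ 2 - 1))) :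
    ∀ z ∈ Set.Ioo (0:ℝ) 1 ∪ Set.Ioi 1,
      DifferentiableAt ℝ φ z ∧ DifferentiableAt ℝ χ z ∧
        z * deriv χ z - 1 ^ 2 * φ z = 0 := by
  -- the open set of good points
  have hopen : IsOpen {w : ℝ | 0 < w ∧ w ≠ 1} :=
    isOpen_Ioi.inter isOpen_compl_singleton
  -- φ agrees with the explicit formula on good points
  have hφval : ∀ w : ℝ, 0 < w → w ≠ 1 →
      φ w = (w ^ 2 - 1) * ((1 / (2 * w)) * (Real.log (w + 1) - Real.log (w - 1))
        - 1 / (w + 1) ^ 2) := by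
    intro w hw0 hw1
    have h1 : w + 1 ≠ 0 := by positivity
    have h2 : |w - 1| ≠ 0 := abs_ne_zero.mpr (sub_ne_zero.mpr hw1)
    rw [hφ]
    simp only
    rw [hf w hw0, Real.log_div h1 h2, Real.log_abs]
  -- φ has explicit derivative at good points
  have hφderiv : ∀ w : ℝ, 0 < w → w ≠ 1 →
      HasDerivAt φ (((w ^ 2 + 1) / (2 * w ^ 2)) * (Real.log (w + 1) - Real.log (w - 1))
        - 1 / w - 2 / (w + 1) ^ 2) w := by
    intro w hw0 hw1
    have hev : ∀ᶠ y in nhds w, 0 < y ∧ y ≠ 1 := hopen.eventually_mem ⟨hw0, hw1⟩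
    refine (hasDerivAt_Phi w hw0 hw1).congr_of_eventuallyEq ?_
    filter_upwards [hev] with y hy
    exact hφval y hy.1 hy.2
  intro z hz
  have hz' : 0 < z ∧ z ≠ 1 := by
    rcases hz with h | h
    · exact ⟨h.1, ne_of_lt h.2⟩
    · exact ⟨lt_trans one_pos h, ne_of_gt h⟩
  obtain ⟨hz0, hz1⟩ := hz'
  have hzne : z ≠ 0 := ne_of_gt hz0
  have h1 : z + 1 ≠ 0 := by positivity
  have h2 : z - 1 ≠ 0 := sub_ne_zero.mpr hz1
  have h3 : z ^ 2 - 1 ≠ 0 := by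
    intro h
    have : (z - 1) * (z + 1) = 0 := by ring_nf; linarith [h]
    rcases mul_eq_zero.mp this with h' | h' <;> [exact h2 h'; exact h1 h']
  have hev : ∀ᶠ y in nhds z, 0 < y ∧ y ≠ 1 := hopen.eventually_mem ⟨hz0, hz1⟩
  -- χ agrees with the explicit formula on good points
  have hχev : χ =ᶠ[nhds z] fun w : ℝ =>
      ((w - 1) ^ 2 / (2 * w)) * (Real.log (w + 1) - Real.log (w - 1)) - 1 := by
    filter_upwards [hev] with w ⟨hw0, hw1⟩
    have hwne : w ≠ 0 := ne_of_gt hw0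
    have hw1' : w + 1 ≠ 0 := by positivity
    have hw2 : w - 1 ≠ 0 := sub_ne_zero.mpr hw1
    have hw3 : w ^ 2 - 1 ≠ 0 := by
      intro h
      have : (w - 1) * (w + 1) = 0 := by ring_nf; linarith [h]
      rcases mul_eq_zero.mp this with h' | h' <;> [exact hw2 h'; exact hw1' h']
    rw [hχ]
    simp only
    rw [(hφderiv w hw0 hw1).deriv, hφval w hw0 hw1]
    field_simp
    ring
  have hX2 := hasDerivAt_X2 z hz0 hz1
  have hχderiv : HasDerivAt χ
      (((z ^ 2 - 1) / (2 * z ^ 2)) * (Real.log (z + 1) - Real.log (z - 1))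
        - (z - 1) / (z * (z + 1))) z := hX2.congr_of_eventuallyEq hχev
  refine ⟨(hφderiv z hz0 hz1).differentiableAt, hχderiv.differentiableAt, ?_⟩
  rw [hχderiv.deriv, hφval z hz0 hz1]
  field_simp
  ring
end

section
/- Let p > 0, p ≠ 2, and let A be defined by 1/A = (1/2)·(ψ(p/4) − ψ(1/2))/(p/4 − 1/2) − 2/p. For z > 0, let f(z) := (A/(p − 2)) · (1/z) · [ 1 − (1 + p·z + z²) / ( |z − 1|^{1 − p/2} · (z + 1)^{1 + p/2} ) ]. Then ∫_0^∞ z·f(z) dz = (p/2) · (1 − 4/p²) / ( ψ(p/4) − ψ(1/2) + 2/p − 1 ). -/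
open MeasureTheory Set Filter Real Topology

/-- The digamma function: the logarithmic derivative of the Gamma function. -/
noncomputable def digamma (x : ℝ) : ℝ :=
  deriv (fun x => Real.log (Real.Gamma x)) x

namespace LyapAux

/-- The fraction appearing in the density. -/
noncomputable def gg (p z : ℝ) : ℝ :=
  (1 + p * z + z ^ 2) / (|z - 1| ^ (1 - p / 2) * (z + 1) ^ (1 + p / 2))

/-- Antiderivative of `1 - gg p` on `(1, ∞)`. -/
noncomputable def FF (p z : ℝ) : ℝ := z - (z + 2 / p) * ((z - 1) / (z + 1)) ^ (p / 2)

/-- Antiderivative of `1 - gg p` on `(0, 1)`. -/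
noncomputable def GG (p z : ℝ) : ℝ := z + (z + 2 / p) * ((1 - z) / (1 + z)) ^ (p / 2)

lemma hasDerivAt_FF {p z : ℝ} (hp : 0 < p) (hz : 1 < z) :
    HasDerivAt (FF p) (1 - gg p z) z := by
  have hz1 : (0:ℝ) < z - 1 := by linarith
  have hz2 : (0:ℝ) < z + 1 := by linarith
  have hq0 : (0:ℝ) < (z - 1) / (z + 1) := div_pos hz1 hz2
  have h1 : HasDerivAt (fun z : ℝ => z - 1) 1 z := (hasDerivAt_id z).sub_const 1
  have h2 : HasDerivAt (fun z : ℝ => z + 1) 1 z := (hasDerivAt_id z).add_const 1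
  have hq : HasDerivAt (fun z : ℝ => (z - 1) / (z + 1))
      ((1 * (z + 1) - (z - 1) * 1) / ((z + 1) ^ 2)) z := h1.div h2 (ne_of_gt hz2)
  have hr : HasDerivAt (fun z : ℝ => ((z - 1) / (z + 1)) ^ (p / 2))
      ((1 * (z + 1) - (z - 1) * 1) / ((z + 1) ^ 2) * (p / 2)
        * ((z - 1) / (z + 1)) ^ (p / 2 - 1)) z :=
    hq.rpow_const (Or.inl (ne_of_gt hq0))
  have hlin : HasDerivAt (fun z : ℝ => z + 2 / p) 1 z := (hasDerivAt_id z).add_const _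
  have hF : HasDerivAt (FF p)
      (1 - (1 * (((z - 1) / (z + 1)) ^ (p / 2)) +
        (z + 2 / p) * ((1 * (z + 1) - (z - 1) * 1) / ((z + 1) ^ 2) * (p / 2)
          * ((z - 1) / (z + 1)) ^ (p / 2 - 1)))) z := (hasDerivAt_id z).sub (hlin.mul hr)
  convert hF using 1
  have hs : (0:ℝ) < (z - 1) ^ (p / 2) := rpow_pos_of_pos hz1 _
  have ht : (0:ℝ) < (z + 1) ^ (p / 2) := rpow_pos_of_pos hz2 _
  have e1 : ((z - 1) / (z + 1)) ^ (p / 2) = (z - 1) ^ (p / 2) / (z + 1) ^ (p / 2) :=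
    Real.div_rpow hz1.le hz2.le _
  have e2 : ((z - 1) / (z + 1)) ^ (p / 2 - 1)
      = ((z - 1) ^ (p / 2) / (z + 1) ^ (p / 2)) / ((z - 1) / (z + 1)) := by
    rw [Real.rpow_sub hq0, Real.rpow_one, e1]
  have e3 : |z - 1| ^ (1 - p / 2) = (z - 1) / (z - 1) ^ (p / 2) := by
    rw [abs_of_pos hz1, Real.rpow_sub hz1, Real.rpow_one]
  have e4 : (z + 1) ^ (1 + p / 2) = (z + 1) * (z + 1) ^ (p / 2) := by
    rw [Real.rpow_add hz2, Real.rpow_one]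
  rw [gg, e1, e2, e3, e4]
  field_simp
  ring

lemma hasDerivAt_GG {p z : ℝ} (hp : 0 < p) (hz0 : 0 < z) (hz : z < 1) :
    HasDerivAt (GG p) (1 - gg p z) z := by
  have hz1 : (0:ℝ) < 1 - z := by linarith
  have hz2 : (0:ℝ) < 1 + z := by linarith
  have hq0 : (0:ℝ) < (1 - z) / (1 + z) := div_pos hz1 hz2
  have h1 : HasDerivAt (fun z : ℝ => 1 - z) (-1) z := by
    simpa using (hasDerivAt_id z).const_sub 1
  have h2 : HasDerivAt (fun z : ℝ => 1 + z) 1 z := by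
    simpa using (hasDerivAt_id z).const_add 1
  have hq : HasDerivAt (fun z : ℝ => (1 - z) / (1 + z))
      (((-1) * (1 + z) - (1 - z) * 1) / ((1 + z) ^ 2)) z := h1.div h2 (ne_of_gt hz2)
  have hr : HasDerivAt (fun z : ℝ => ((1 - z) / (1 + z)) ^ (p / 2))
      (((-1) * (1 + z) - (1 - z) * 1) / ((1 + z) ^ 2) * (p / 2)
        * ((1 - z) / (1 + z)) ^ (p / 2 - 1)) z :=
    hq.rpow_const (Or.inl (ne_of_gt hq0))
  have hlin : HasDerivAt (fun z : ℝ => z + 2 / p) 1 z := (hasDerivAt_id z).add_const _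
  have hG : HasDerivAt (GG p)
      (1 + (1 * (((1 - z) / (1 + z)) ^ (p / 2)) +
        (z + 2 / p) * (((-1) * (1 + z) - (1 - z) * 1) / ((1 + z) ^ 2) * (p / 2)
          * ((1 - z) / (1 + z)) ^ (p / 2 - 1)))) z := (hasDerivAt_id z).add (hlin.mul hr)
  convert hG using 1
  have hs : (0:ℝ) < (1 - z) ^ (p / 2) := rpow_pos_of_pos hz1 _
  have ht : (0:ℝ) < (1 + z) ^ (p / 2) := rpow_pos_of_pos hz2 _
  have e1 : ((1 - z) / (1 + z)) ^ (p / 2) = (1 - z) ^ (p / 2) / (1 + z) ^ (p / 2) :=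
    Real.div_rpow hz1.le hz2.le _
  have e2 : ((1 - z) / (1 + z)) ^ (p / 2 - 1)
      = ((1 - z) ^ (p / 2) / (1 + z) ^ (p / 2)) / ((1 - z) / (1 + z)) := by
    rw [Real.rpow_sub hq0, Real.rpow_one, e1]
  have e3 : |z - 1| ^ (1 - p / 2) = (1 - z) / (1 - z) ^ (p / 2) := by
    rw [show |z - 1| = 1 - z by rw [abs_sub_comm]; exact abs_of_pos hz1,
      Real.rpow_sub hz1, Real.rpow_one]
  have e4 : (z + 1) ^ (1 + p / 2) = (1 + z) * (1 + z) ^ (p / 2) := by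
    rw [show z + 1 = 1 + z by ring, Real.rpow_add hz2, Real.rpow_one]
  rw [gg, e1, e2, e3, e4]
  field_simp
  ring
lemma denom_pos {p z : ℝ} (hz0 : 0 < z) (hzne : z ≠ 1) :
    0 < |z - 1| ^ (1 - p / 2) * (z + 1) ^ (1 + p / 2) :=
  mul_pos (rpow_pos_of_pos (abs_pos.2 (sub_ne_zero.2 hzne)) _)
    (rpow_pos_of_pos (by linarith) _)

lemma denom_eq_lt {p z : ℝ} (hz0 : 0 < z) (hz : z < 1) :
    |z - 1| ^ (1 - p / 2) * (z + 1) ^ (1 + p / 2)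
      = ((1 - z) * (1 + z)) * ((1 + z) / (1 - z)) ^ (p / 2) := by
  have hz1 : (0:ℝ) < 1 - z := by linarith
  have hz2 : (0:ℝ) < 1 + z := by linarith
  have hs : (0:ℝ) < (1 - z) ^ (p / 2) := rpow_pos_of_pos hz1 _
  have ht : (0:ℝ) < (1 + z) ^ (p / 2) := rpow_pos_of_pos hz2 _
  rw [show |z - 1| = 1 - z by rw [abs_sub_comm]; exact abs_of_pos hz1,
    Real.rpow_sub hz1, Real.rpow_one, show z + 1 = 1 + z by ring,
    Real.rpow_add hz2, Real.rpow_one, Real.div_rpow hz2.le hz1.le]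
  field_simp

lemma denom_eq_gt {p z : ℝ} (hz : 1 < z) :
    |z - 1| ^ (1 - p / 2) * (z + 1) ^ (1 + p / 2)
      = ((z - 1) * (z + 1)) * ((z + 1) / (z - 1)) ^ (p / 2) := by
  have hz1 : (0:ℝ) < z - 1 := by linarith
  have hz2 : (0:ℝ) < z + 1 := by linarith
  have hs : (0:ℝ) < (z - 1) ^ (p / 2) := rpow_pos_of_pos hz1 _
  have ht : (0:ℝ) < (z + 1) ^ (p / 2) := rpow_pos_of_pos hz2 _
  rw [abs_of_pos hz1, Real.rpow_sub hz1, Real.rpow_one,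
    Real.rpow_add hz2, Real.rpow_one, Real.div_rpow hz2.le hz1.le]
  field_simp

lemma gg_le_one {p z : ℝ} (hp2 : 2 ≤ p) (hz0 : 0 < z) (hzne : z ≠ 1) :
    gg p z ≤ 1 := by
  rw [gg, div_le_one (denom_pos hz0 hzne)]
  rcases lt_or_gt_of_ne hzne with hz | hz
  · have hz1 : (0:ℝ) < 1 - z := by linarith
    have hz2 : (0:ℝ) < 1 + z := by linarith
    have key : (1 : ℝ) + (p / 2) * (2 * z / (1 - z)) ≤ (1 + 2 * z / (1 - z)) ^ (p / 2) :=
      one_add_mul_self_le_rpow_one_add (by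
        have : (0:ℝ) ≤ 2 * z / (1 - z) := by positivity
        linarith) (by linarith)
    have hbase : 1 + 2 * z / (1 - z) = (1 + z) / (1 - z) := by field_simp; ring
    rw [hbase] at key
    rw [denom_eq_lt hz0 hz]
    calc 1 + p * z + z ^ 2 ≤ ((1 - z) * (1 + z)) * (1 + (p / 2) * (2 * z / (1 - z))) := by
          have : ((1 - z) * (1 + z)) * (1 + (p / 2) * (2 * z / (1 - z)))
              = 1 + p * z + (p - 1) * z ^ 2 := by field_simp; ring
          rw [this]
          nlinarith [sq_nonneg z]
      _ ≤ ((1 - z) * (1 + z)) * ((1 + z) / (1 - z)) ^ (p / 2) :=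
          mul_le_mul_of_nonneg_left key (by positivity)
  · have hz1 : (0:ℝ) < z - 1 := by linarith
    have hz2 : (0:ℝ) < z + 1 := by linarith
    have key : (1 : ℝ) + (p / 2) * (2 / (z - 1)) ≤ (1 + 2 / (z - 1)) ^ (p / 2) :=
      one_add_mul_self_le_rpow_one_add (by
        have : (0:ℝ) ≤ 2 / (z - 1) := by positivity
        linarith) (by linarith)
    have hbase : 1 + 2 / (z - 1) = (z + 1) / (z - 1) := by field_simp; ring
    rw [hbase] at key
    rw [denom_eq_gt hz]
    calc 1 + p * z + z ^ 2 ≤ ((z - 1) * (z + 1)) * (1 + (p / 2) * (2 / (z - 1))) := by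
          have : ((z - 1) * (z + 1)) * (1 + (p / 2) * (2 / (z - 1)))
              = z ^ 2 + p * z + p - 1 := by field_simp; ring
          rw [this]
          linarith
      _ ≤ ((z - 1) * (z + 1)) * ((z + 1) / (z - 1)) ^ (p / 2) :=
          mul_le_mul_of_nonneg_left key (by positivity)

lemma one_le_gg {p z : ℝ} (hp : 0 < p) (hp2 : p ≤ 2) (hz0 : 0 < z) (hzne : z ≠ 1) :
    1 ≤ gg p z := by
  rw [gg, le_div_iff₀ (denom_pos hz0 hzne), one_mul]
  rcases lt_or_gt_of_ne hzne with hz | hz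
  · have hz1 : (0:ℝ) < 1 - z := by linarith
    have hz2 : (0:ℝ) < 1 + z := by linarith
    have key : ((1:ℝ) + 2 * z / (1 - z)) ^ (p / 2) ≤ 1 + (p / 2) * (2 * z / (1 - z)) :=
      rpow_one_add_le_one_add_mul_self (by
        have : (0:ℝ) ≤ 2 * z / (1 - z) := by positivity
        linarith) (by linarith) (by linarith)
    have hbase : 1 + 2 * z / (1 - z) = (1 + z) / (1 - z) := by field_simp; ring
    rw [hbase] at key
    rw [denom_eq_lt hz0 hz]
    calc ((1 - z) * (1 + z)) * ((1 + z) / (1 - z)) ^ (p / 2)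
        ≤ ((1 - z) * (1 + z)) * (1 + (p / 2) * (2 * z / (1 - z))) :=
          mul_le_mul_of_nonneg_left key (by positivity)
      _ ≤ 1 + p * z + z ^ 2 := by
          have : ((1 - z) * (1 + z)) * (1 + (p / 2) * (2 * z / (1 - z)))
              = 1 + p * z + (p - 1) * z ^ 2 := by field_simp; ring
          rw [this]
          nlinarith [sq_nonneg z]
  · have hz1 : (0:ℝ) < z - 1 := by linarith
    have hz2 : (0:ℝ) < z + 1 := by linarith
    have key : ((1:ℝ) + 2 / (z - 1)) ^ (p / 2) ≤ 1 + (p / 2) * (2 / (z - 1)) :=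
      rpow_one_add_le_one_add_mul_self (by
        have : (0:ℝ) ≤ 2 / (z - 1) := by positivity
        linarith) (by linarith) (by linarith)
    have hbase : 1 + 2 / (z - 1) = (z + 1) / (z - 1) := by field_simp; ring
    rw [hbase] at key
    rw [denom_eq_gt hz]
    calc ((z - 1) * (z + 1)) * ((z + 1) / (z - 1)) ^ (p / 2)
        ≤ ((z - 1) * (z + 1)) * (1 + (p / 2) * (2 / (z - 1))) :=
          mul_le_mul_of_nonneg_left key (by positivity)
      _ ≤ 1 + p * z + z ^ 2 := by
          have : ((z - 1) * (z + 1)) * (1 + (p / 2) * (2 / (z - 1)))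
              = z ^ 2 + p * z + p - 1 := by field_simp; ring
          rw [this]
          linarith
lemma tendsto_FF_atTop {p : ℝ} (hp : 0 < p) :
    Tendsto (FF p) atTop (𝓝 (p - 2 / p)) := by
  set r : ℝ → ℝ := fun t => ((1 - t) / (1 + t)) ^ (p / 2) with hr_def
  have hr0 : r 0 = 1 := by simp [hr_def]
  have h1 : HasDerivAt (fun t : ℝ => 1 - t) (-1) 0 := by
    simpa using (hasDerivAt_id (0:ℝ)).const_sub 1
  have h2 : HasDerivAt (fun t : ℝ => 1 + t) 1 0 := by
    simpa using (hasDerivAt_id (0:ℝ)).const_add 1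
  have hq : HasDerivAt (fun t : ℝ => (1 - t) / (1 + t))
      (((-1) * (1 + 0) - (1 - 0) * 1) / ((1 + 0) ^ 2)) 0 := by
    simpa using h1.fun_div h2 (by norm_num)
  have hrd : HasDerivAt r
      (((-1) * (1 + 0) - (1 - 0) * 1) / ((1 + 0) ^ 2) * (p / 2)
        * ((1 - 0) / (1 + 0)) ^ (p / 2 - 1)) 0 :=
    hq.rpow_const (Or.inl (by norm_num))
  have hψ : HasDerivAt (fun t => -(r t)) p 0 := by
    have := (hrd.fun_neg : HasDerivAt (fun t => -(r t)) _ 0)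
    refine this.congr_deriv ?_
    simp [Real.one_rpow]
    ring
  have hslope : Tendsto (fun t => (1 - r t) / t) (𝓝[>] 0) (𝓝 p) := by
    have h := hasDerivAt_iff_tendsto_slope.mp hψ
    have h' := h.mono_left (nhdsWithin_mono _ (fun x hx => ne_of_gt hx))
    refine h'.congr (fun t => ?_)
    simp [slope_def_field, hr0]
    ring
  have hrcont : Tendsto r (𝓝[>] 0) (𝓝 1) := by
    have : ContinuousAt r 0 := by
      apply ContinuousAt.rpow_const
      · exact (continuousAt_const.sub continuousAt_id).div
          (continuousAt_const.add continuousAt_id) (by norm_num)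
      · left; norm_num
    simpa [hr0] using this.tendsto.mono_left nhdsWithin_le_nhds
  have hφ : Tendsto (fun t => (1 - r t) / t - 2 / p * r t) (𝓝[>] 0) (𝓝 (p - 2 / p)) := by
    have := hslope.sub (hrcont.const_mul (2 / p))
    simpa using this
  have hinv : Tendsto (fun z : ℝ => z⁻¹) atTop (𝓝[>] (0:ℝ)) := tendsto_inv_atTop_nhdsGT_zero
  have comp := hφ.comp hinv
  refine comp.congr' ?_
  filter_upwards [eventually_gt_atTop (1:ℝ)] with z hz
  have hz0 : z ≠ 0 := by positivity
  have hz2 : z + 1 ≠ 0 := by positivity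
  have hbase : (1 - z⁻¹) / (1 + z⁻¹) = (z - 1) / (z + 1) := by
    field_simp
  show (1 - r z⁻¹) / z⁻¹ - 2 / p * r z⁻¹ = FF p z
  rw [hr_def]
  simp only [hbase]
  rw [div_inv_eq_mul, FF]
  ring

lemma FF_one {p : ℝ} (hp : 0 < p) : FF p 1 = 1 := by
  have : ((1:ℝ) - 1) / (1 + 1) = 0 := by norm_num
  rw [FF, this, Real.zero_rpow (by positivity)]
  ring

lemma GG_zero {p : ℝ} : GG p 0 = 2 / p := by
  simp [GG, Real.one_rpow]

lemma GG_one {p : ℝ} (hp : 0 < p) : GG p 1 = 1 := by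
  have : ((1:ℝ) - 1) / (1 + 1) = 0 := by norm_num
  rw [GG, this, Real.zero_rpow (by positivity)]
  ring

lemma continuousAt_FF_one {p : ℝ} (hp : 0 < p) : ContinuousAt (FF p) 1 := by
  apply ContinuousAt.sub continuousAt_id
  apply ContinuousAt.mul (continuousAt_id.add continuousAt_const)
  apply ContinuousAt.rpow_const
  · exact (continuousAt_id.sub continuousAt_const).div
      (continuousAt_id.add continuousAt_const) (by norm_num)
  · right; positivity

lemma continuousOn_GG {p : ℝ} (hp : 0 < p) : ContinuousOn (GG p) (Icc 0 1) := by
  apply ContinuousOn.add continuousOn_id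
  apply ContinuousOn.mul (continuousOn_id.add continuousOn_const)
  apply ContinuousOn.rpow_const
  · apply ContinuousOn.div (continuousOn_const.sub continuousOn_id)
      (continuousOn_const.add continuousOn_id)
    intro x hx
    have : (0:ℝ) ≤ x := hx.1
    show (1:ℝ) + x ≠ 0
    positivity
  · intro x hx; right; positivity

lemma integrableOn_Ioi_one {p : ℝ} (hp : 0 < p) :
    IntegrableOn (fun z => 1 - gg p z) (Ioi 1) := by
  have hcont : ContinuousWithinAt (FF p) (Ici 1) 1 :=
    (continuousAt_FF_one hp).continuousWithinAt
  have hderiv : ∀ x ∈ Ioi (1:ℝ), HasDerivAt (FF p) (1 - gg p x) x :=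
    fun x hx => hasDerivAt_FF hp hx
  rcases le_total 2 p with h | h
  · exact integrableOn_Ioi_deriv_of_nonneg hcont hderiv
      (fun x hx => by have := gg_le_one h (lt_trans one_pos hx) (ne_of_gt hx); linarith)
      (tendsto_FF_atTop hp)
  · exact integrableOn_Ioi_deriv_of_nonpos hcont hderiv
      (fun x hx => by have := one_le_gg hp h (lt_trans one_pos hx) (ne_of_gt hx); linarith)
      (tendsto_FF_atTop hp)

lemma integral_Ioi_one {p : ℝ} (hp : 0 < p) :
    ∫ z in Ioi (1:ℝ), (1 - gg p z) = p - 2 / p - 1 := by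
  have hcont : ContinuousWithinAt (FF p) (Ici 1) 1 :=
    (continuousAt_FF_one hp).continuousWithinAt
  have hderiv : ∀ x ∈ Ioi (1:ℝ), HasDerivAt (FF p) (1 - gg p x) x :=
    fun x hx => hasDerivAt_FF hp hx
  rcases le_total 2 p with h | h
  · have := integral_Ioi_of_hasDerivAt_of_nonneg hcont hderiv
      (fun x hx => by have := gg_le_one h (lt_trans one_pos hx) (ne_of_gt hx); linarith)
      (tendsto_FF_atTop hp)
    rw [this, FF_one hp]
  · have := integral_Ioi_of_hasDerivAt_of_nonpos hcont hderiv
      (fun x hx => by have := one_le_gg hp h (lt_trans one_pos hx) (ne_of_gt hx); linarith)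
      (tendsto_FF_atTop hp)
    rw [this, FF_one hp]

lemma integrableOn_Ioc_one {p : ℝ} (hp : 0 < p) :
    IntegrableOn (fun z => 1 - gg p z) (Ioc 0 1) := by
  have hcont := continuousOn_GG hp
  have hderiv : ∀ x ∈ Ioo (0:ℝ) 1, HasDerivAt (GG p) (1 - gg p x) x :=
    fun x hx => hasDerivAt_GG hp hx.1 hx.2
  rcases le_total 2 p with h | h
  · exact intervalIntegral.integrableOn_deriv_of_nonneg hcont hderiv
      (fun x hx => by have := gg_le_one h hx.1 (ne_of_lt hx.2); linarith)
  · have key := intervalIntegral.integrableOn_deriv_of_nonneg (g := fun z => -(GG p z))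
      (g' := fun z => gg p z - 1) hcont.neg
      (fun x hx => by simpa [neg_sub] using (hderiv x hx).fun_neg)
      (fun x hx => by
        have := one_le_gg hp h hx.1 (ne_of_lt hx.2)
        show (0:ℝ) ≤ gg p x - 1
        linarith)
    exact key.neg.congr (Filter.Eventually.of_forall fun z => by
      simp only [Pi.neg_apply]; ring)

lemma integral_Ioc_one {p : ℝ} (hp : 0 < p) :
    ∫ z in Ioc (0:ℝ) 1, (1 - gg p z) = 1 - 2 / p := by
  have h := intervalIntegral.integral_eq_sub_of_hasDeriv_right_of_le zero_le_one
    (continuousOn_GG hp)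
    (fun x hx => (hasDerivAt_GG hp hx.1 hx.2).hasDerivWithinAt)
    ((intervalIntegrable_iff_integrableOn_Ioc_of_le zero_le_one).2 (integrableOn_Ioc_one hp))
  rw [intervalIntegral.integral_of_le zero_le_one] at h
  rw [h, GG_one hp, GG_zero]

lemma integral_total {p : ℝ} (hp : 0 < p) :
    ∫ z in Ioi (0:ℝ), (1 - gg p z) = p - 4 / p := by
  rw [← Ioc_union_Ioi_eq_Ioi (zero_le_one : (0:ℝ) ≤ 1),
    setIntegral_union (Ioc_disjoint_Ioi le_rfl) measurableSet_Ioi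
      (integrableOn_Ioc_one hp) (integrableOn_Ioi_one hp),
    integral_Ioc_one hp, integral_Ioi_one hp]
  ring

end LyapAux

/-- **The Lyapunov exponent at energy `E = -1` for `q = 1`.**
With the normalised stationary density
`f(z) = (A/(p-2)) (1/z) [1 - (1+pz+z²)/(|z-1|^{1-p/2} (z+1)^{1+p/2})]` where
`1/A = (1/2)(ψ(p/4)-ψ(1/2))/(p/4-1/2) - 2/p`,
one has `∫_0^∞ z f(z) dz = (p/2)(1-4/p²)/(ψ(p/4)-ψ(1/2)+2/p-1)`. -/
theorem lyapunov_exponent_q_one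
    (p A : ℝ) (hp : 0 < p) (hp2 : p ≠ 2)
    (hA : 1 / A = (1 / 2) * ((digamma (p / 4) - digamma (1 / 2)) / (p / 4 - 1 / 2))
        - 2 / p)
    (f : ℝ → ℝ)
    (hf : ∀ z : ℝ, 0 < z → f z =
      A / (p - 2) * (1 / z) *
        (1 - (1 + p * z + z ^ 2) /
          (|z - 1| ^ (1 - p / 2) * (z + 1) ^ (1 + p / 2)))) :
    ∫ z in Set.Ioi (0:ℝ), z * f z =
      (p / 2) * (1 - 4 / p ^ 2) /
        (digamma (p / 4) - digamma (1 / 2) + 2 / p - 1) := by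
  have hp0 : p ≠ 0 := ne_of_gt hp
  have hpm2 : p - 2 ≠ 0 := sub_ne_zero.2 hp2
  have h1 : ∀ z ∈ Ioi (0:ℝ), z * f z = A / (p - 2) * (1 - LyapAux.gg p z) := by
    intro z hz
    have hz0 : z ≠ 0 := ne_of_gt hz
    rw [hf z hz, LyapAux.gg]
    have : z * (A / (p - 2) * (1 / z) *
        (1 - (1 + p * z + z ^ 2) /
          (|z - 1| ^ (1 - p / 2) * (z + 1) ^ (1 + p / 2))))
        = (z * (1 / z)) * (A / (p - 2) *
        (1 - (1 + p * z + z ^ 2) /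
          (|z - 1| ^ (1 - p / 2) * (z + 1) ^ (1 + p / 2)))) := by ring
    rw [this, one_div, mul_inv_cancel₀ hz0, one_mul]
  have h2 : ∫ z in Ioi (0:ℝ), z * f z
      = A / (p - 2) * ∫ z in Ioi (0:ℝ), (1 - LyapAux.gg p z) := by
    rw [setIntegral_congr_fun measurableSet_Ioi h1, integral_const_mul]
  rw [h2, LyapAux.integral_total hp]
  set Δ : ℝ := digamma (p / 4) - digamma (1 / 2) with hΔ
  clear_value Δ
  have h48 : (-8 : ℝ) + p * 4 ≠ 0 := fun h => hp2 (by linarith)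
  have hA' : 1 / A = 2 * (Δ * p - p + 2) / (p * (p - 2)) := by
    rw [hA]; field_simp
    have h24 : (-4 + p * 2 : ℝ) ≠ 0 := fun h => hp2 (by linarith)
    field_simp
    linear_combination (2 * Δ * p) * (mul_inv_cancel₀ h24)
  by_cases hK : Δ * p - p + 2 = 0
  · have hA0 : A = 0 := by
      have h0 : 1 / A = 0 := by rw [hA', hK]; simp
      by_contra hAne
      exact one_div_ne_zero hAne h0
    have hden : Δ + 2 / p - 1 = 0 := by
      field_simp
      linarith [hK]
    rw [hA0, hden, div_zero]
    simp
  · have hAne : A ≠ 0 := by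
      intro h0
      rw [h0] at hA'
      simp only [div_zero, one_div, inv_zero] at hA'
      have : 2 * (Δ * p - p + 2) = 0 := by
        field_simp at hA'
        linarith [hA']
      exact hK (by linarith)
    have hAval : A = p * (p - 2) / (2 * (Δ * p - p + 2)) := by
      have h0 : 1 / A = 2 * (Δ * p - p + 2) / (p * (p - 2)) := hA'
      field_simp at h0 ⊢
      rw [eq_div_iff (fun h => hK (by linarith))]
      linarith [h0]
    have hden : Δ + 2 / p - 1 = (Δ * p - p + 2) / p := by
      field_simp; ring
    rw [hAval, hden]
    field_simp
end

section
/- Let p > 0 and q > 0, and let (yₙ)_{n≥0} be the sequence of real numbers defined by y₀ = 1, y₁ = p·q/(2q + 1), and the recurrence (n + 2)(n + 2q + 2)·y_{n+2} = p·(n + q + 1)·y_{n+1} + n·(n + 2q)·yₙ for n ≥ 0. Then yₙ ≥ 0 for every n, the power series ∑_{n≥0} yₙ·zⁿ has radius of convergence at least 1, and its sum y(z) satisfies y(z) ≥ 1 > 0 for every z ∈ [0, 1). -/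
/-- **Positivity and convergence of the Heun series.**
For `p, q > 0`, the coefficients of the Heun function
`Hl(-1, -pq; 0, 2q, 2q+1, p/2; z)`, defined by `y₀ = 1`, `y₁ = pq/(2q+1)` and the
recurrence `(n+2)(n+2q+2) y_{n+2} = p(n+q+1) y_{n+1} + n(n+2q) yₙ`, are
nonnegative, the power series `∑ yₙ zⁿ` has radius of convergence at least `1`,
and its sum is `≥ 1` on `[0, 1)`. -/
theorem heun_series_positive
    (p q : ℝ) (hp : 0 < p) (hq : 0 < q) (y : ℕ → ℝ)
    (h0 : y 0 = 1) (h1 : y 1 = p * q / (2 * q + 1))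
    (hrec : ∀ n : ℕ,
      ((n : ℝ) + 2) * ((n : ℝ) + 2 * q + 2) * y (n + 2) =
        p * ((n : ℝ) + q + 1) * y (n + 1) + (n : ℝ) * ((n : ℝ) + 2 * q) * y n) :
    (∀ n : ℕ, 0 ≤ y n) ∧
    (∀ z : ℝ, |z| < 1 → Summable (fun n : ℕ => y n * z ^ n)) ∧
    (∀ z : ℝ, 0 ≤ z → z < 1 → 1 ≤ ∑' n : ℕ, y n * z ^ n) := by
  -- Nonnegativity
  have hnn2 : ∀ n : ℕ, 0 ≤ y n ∧ 0 ≤ y (n + 1) := by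
    intro n
    induction n with
    | zero =>
      constructor
      · rw [h0]; norm_num
      · rw [h1]; positivity
    | succ k ih =>
      refine ⟨ih.2, ?_⟩
      have hD : (0:ℝ) < ((k : ℝ) + 2) * ((k : ℝ) + 2 * q + 2) := by positivity
      have hnum : 0 ≤ p * ((k : ℝ) + q + 1) * y (k + 1) + (k : ℝ) * ((k : ℝ) + 2 * q) * y k := by
        have h1' : 0 ≤ p * ((k : ℝ) + q + 1) * y (k + 1) := by
          have : (0:ℝ) ≤ p * ((k : ℝ) + q + 1) := by positivity
          exact mul_nonneg this ih.2
        have h2' : 0 ≤ (k : ℝ) * ((k : ℝ) + 2 * q) * y k := by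
          have : (0:ℝ) ≤ (k : ℝ) * ((k : ℝ) + 2 * q) := by positivity
          exact mul_nonneg this ih.1
        linarith
      have := hrec k
      nlinarith [mul_pos hD hD]
  have hnn : ∀ n : ℕ, 0 ≤ y n := fun n => (hnn2 n).1
  -- Summability
  have hsummable : ∀ z : ℝ, |z| < 1 → Summable (fun n : ℕ => y n * z ^ n) := by
    intro z hz
    set r : ℝ := (|z| + 1) / 2 with hrdef
    have hz0 : 0 ≤ |z| := abs_nonneg z
    have hzr : |z| < r := by rw [hrdef]; linarith
    have hr0 : 0 < r := lt_of_le_of_lt hz0 hzr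
    have hr1 : r < 1 := by rw [hrdef]; linarith
    have hr2 : r ^ 2 < 1 := by nlinarith
    obtain ⟨N, hN⟩ := exists_nat_ge (p / (1 - r ^ 2) + p * (q + 1) / 4)
    set M : ℝ := max (y N * r ^ N) (y (N + 1) * r ^ (N + 1)) with hMdef
    have hM0 : 0 ≤ M := le_trans (mul_nonneg (hnn N) (pow_nonneg hr0.le N)) (le_max_left _ _)
    -- the key bound for n ≥ N
    have hABD : ∀ n : ℕ, N ≤ n →
        p * ((n : ℝ) + q + 1) * r + (n : ℝ) * ((n : ℝ) + 2 * q) * r ^ 2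
          ≤ ((n : ℝ) + 2) * ((n : ℝ) + 2 * q + 2) := by
      intro n hn
      have hn' : (N : ℝ) ≤ (n : ℝ) := by exact_mod_cast hn
      have h1r : 0 < 1 - r ^ 2 := by linarith
      have hd1 : p / (1 - r ^ 2) ≤ (n : ℝ) := by
        have : (0:ℝ) ≤ p * (q + 1) / 4 := by positivity
        linarith
      have hn1 : p ≤ (n : ℝ) * (1 - r ^ 2) := by
        rw [div_le_iff₀ h1r] at hd1; linarith
      have hd2 : p * (q + 1) / 4 ≤ (n : ℝ) := by
        have : (0:ℝ) ≤ p / (1 - r ^ 2) := div_nonneg hp.le h1r.le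
        linarith
      have hn2 : p * (q + 1) ≤ 4 * (n : ℝ) := by linarith
      have hn0 : (0:ℝ) ≤ (n : ℝ) := Nat.cast_nonneg n
      nlinarith [mul_le_mul_of_nonneg_left hn1 hn0, mul_nonneg (mul_nonneg hp.le hn0) (sub_nonneg.mpr hr1.le), mul_nonneg (mul_nonneg hp.le (mul_nonneg hq.le (by linarith : (0:ℝ) ≤ q + 1))) (sub_nonneg.mpr hr1.le), mul_nonneg hn0 (mul_nonneg hq.le h1r.le), mul_nonneg (mul_nonneg hp.le hq.le) (sub_nonneg.mpr hr1.le)]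
    -- bounded tail
    have hMb : ∀ k : ℕ, y (N + k) * r ^ (N + k) ≤ M ∧ y (N + k + 1) * r ^ (N + k + 1) ≤ M := by
      intro k
      induction k with
      | zero => exact ⟨le_max_left _ _, le_max_right _ _⟩
      | succ j ih =>
        refine ⟨ih.2, ?_⟩
        set n := N + j with hndef
        have hn : N ≤ n := Nat.le_add_right _ _
        have hD : (0:ℝ) < ((n : ℝ) + 2) * ((n : ℝ) + 2 * q + 2) := by positivity
        have key : ((n : ℝ) + 2) * ((n : ℝ) + 2 * q + 2) * (y (n + 2) * r ^ (n + 2)) =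
            p * ((n : ℝ) + q + 1) * r * (y (n + 1) * r ^ (n + 1)) +
            (n : ℝ) * ((n : ℝ) + 2 * q) * r ^ 2 * (y n * r ^ n) := by
          linear_combination r ^ (n + 2) * hrec n
        have hA : (0:ℝ) ≤ p * ((n : ℝ) + q + 1) * r := by positivity
        have hB : (0:ℝ) ≤ (n : ℝ) * ((n : ℝ) + 2 * q) * r ^ 2 := by positivity
        have hm0 : y n * r ^ n ≤ M := ih.1
        have hm1 : y (n + 1) * r ^ (n + 1) ≤ M := ih.2
        have habd := hABD n hn
        have step : ((n : ℝ) + 2) * ((n : ℝ) + 2 * q + 2) * (y (n + 2) * r ^ (n + 2)) ≤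
            ((n : ℝ) + 2) * ((n : ℝ) + 2 * q + 2) * M := by
          rw [key]
          nlinarith [mul_le_mul_of_nonneg_left hm1 hA, mul_le_mul_of_nonneg_left hm0 hB,
            mul_le_mul_of_nonneg_right habd hM0]
        have : y (n + 2) * r ^ (n + 2) ≤ M := le_of_mul_le_mul_left step hD
        have hidx : N + (j + 1) + 1 = n + 2 := by omega
        rw [hidx]
        exact this
    -- comparison with geometric series
    set t : ℝ := |z| / r with htdef
    have ht0 : 0 ≤ t := by positivity
    have ht1 : t < 1 := by rw [htdef, div_lt_one hr0]; exact hzr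
    have hzrt : |z| = r * t := by rw [htdef]; field_simp
    rw [← summable_nat_add_iff N]
    apply Summable.of_abs
    refine Summable.of_nonneg_of_le (fun n => abs_nonneg _) (fun n => ?_)
      ((summable_geometric_of_lt_one ht0 ht1).mul_left M)
    · 
      have habs : |y (n + N) * z ^ (n + N)| = y (n + N) * |z| ^ (n + N) := by
        rw [abs_mul, abs_pow, abs_of_nonneg (hnn _)]
      rw [habs, hzrt, mul_pow, ← mul_assoc]
      have h1 : y (n + N) * r ^ (n + N) ≤ M := by
        have := (hMb n).1
        rwa [Nat.add_comm N n] at this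
      have h2 : y (n + N) * r ^ (n + N) * t ^ (n + N) ≤ M * t ^ (n + N) :=
        mul_le_mul_of_nonneg_right h1 (by positivity)
      have h3 : M * t ^ (n + N) ≤ M * t ^ n := by
        apply mul_le_mul_of_nonneg_left _ hM0
        exact pow_le_pow_of_le_one ht0 ht1.le (Nat.le_add_right n N)
      linarith
  refine ⟨hnn, hsummable, ?_⟩
  intro z hz0 hz1
  have hzabs : |z| < 1 := by rw [abs_of_nonneg hz0]; exact hz1
  have hs := hsummable z hzabs
  have h00 : y 0 * z ^ 0 = 1 := by rw [h0]; ring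
  calc (1:ℝ) = y 0 * z ^ 0 := h00.symm
    _ ≤ ∑' n : ℕ, y n * z ^ n := Summable.le_tsum hs 0 (fun j _ => mul_nonneg (hnn j) (pow_nonneg hz0 j))
end

section
/- Let p > 0 and q > 0, and let (yₙ)_{n≥0} be the sequence of real numbers defined by y₀ = 1, y₁ = p·q/(2q + 1), and the recurrence (n + 2)(n + 2q + 2)·y_{n+2} = p·(n + q + 1)·y_{n+1} + n·(n + 2q)·yₙ for n ≥ 0. Then the sum y(z) := ∑_{n≥0} yₙ·zⁿ is twice differentiable on (0, 1) and satisfies there the differential equation y''(z) + [ (2q + 1)/z + (p/2)/(z − 1) + (−p/2)/(z + 1) ]·y'(z) + ( p·q / ( z·(z − 1)·(z + 1) ) )·y(z) = 0. -/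
open Set Filter

private lemma heun_y_nonneg (p q : ℝ) (hp : 0 < p) (hq : 0 < q) (y : ℕ → ℝ)
    (h0 : y 0 = 1) (h1 : y 1 = p * q / (2 * q + 1))
    (hrec : ∀ n : ℕ,
      ((n : ℝ) + 2) * ((n : ℝ) + 2 * q + 2) * y (n + 2) =
        p * ((n : ℝ) + q + 1) * y (n + 1) + (n : ℝ) * ((n : ℝ) + 2 * q) * y n) :
    ∀ n, 0 ≤ y n := by
  have key : ∀ n, 0 ≤ y n ∧ 0 ≤ y (n + 1) := by
    intro n
    induction n with
    | zero =>
      constructor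
      · rw [h0]; norm_num
      · rw [h1]; positivity
    | succ m ih =>
      refine ⟨ih.2, ?_⟩
      have h := hrec m
      have hpos : (0:ℝ) < ((m:ℝ) + 2) * ((m:ℝ) + 2 * q + 2) := by positivity
      have hR : 0 ≤ p * ((m:ℝ) + q + 1) * y (m + 1) + (m:ℝ) * ((m:ℝ) + 2 * q) * y m := by
        have h1' := ih.1
        have h2' := ih.2
        have e1 : 0 ≤ p * ((m:ℝ) + q + 1) * y (m + 1) :=
          mul_nonneg (by positivity) h2'
        have e2 : 0 ≤ (m:ℝ) * ((m:ℝ) + 2 * q) * y m :=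
          mul_nonneg (by positivity) h1'
        linarith
      rw [← h] at hR
      exact (mul_nonneg_iff_of_pos_left hpos).mp hR
  exact fun n => (key n).1

private lemma heun_y_growth (p q : ℝ) (hp : 0 < p) (hq : 0 < q) (y : ℕ → ℝ)
    (h0 : y 0 = 1) (h1 : y 1 = p * q / (2 * q + 1))
    (hrec : ∀ n : ℕ,
      ((n : ℝ) + 2) * ((n : ℝ) + 2 * q + 2) * y (n + 2) =
        p * ((n : ℝ) + q + 1) * y (n + 1) + (n : ℝ) * ((n : ℝ) + 2 * q) * y n)
    (B : ℝ) (hB : 1 < B) :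
    ∃ C : ℝ, 0 < C ∧ ∀ n, |y n| ≤ C * B ^ n := by
  have hy := heun_y_nonneg p q hp hq y h0 h1 hrec
  have hB0 : 0 < B := lt_trans one_pos hB
  have hB2 : 0 < B ^ 2 - 1 := by nlinarith
  obtain ⟨N, hN⟩ := exists_nat_ge (max (q + 1) (2 * p * B / (B ^ 2 - 1)))
  have hkey : ∀ n : ℕ, N ≤ n →
      (n:ℝ) * ((n:ℝ) + 2 * q) + p * B * ((n:ℝ) + q + 1) ≤
        B ^ 2 * (((n:ℝ) + 2) * ((n:ℝ) + 2 * q + 2)) := by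
    intro n hn
    have hn' : (N:ℝ) ≤ n := Nat.cast_le.mpr hn
    have h1' : q + 1 ≤ (n:ℝ) := le_trans (le_trans (le_max_left _ _) hN) hn'
    have h2' : 2 * p * B / (B ^ 2 - 1) ≤ (n:ℝ) := le_trans (le_trans (le_max_right _ _) hN) hn'
    have h3' : 2 * p * B ≤ (B ^ 2 - 1) * n := by
      rw [div_le_iff₀ hB2] at h2'; linarith
    have hn0 : (0:ℝ) ≤ n := Nat.cast_nonneg n
    have h4 : p * B * ((n:ℝ) + q + 1) ≤ (B ^ 2 - 1) * (n:ℝ) ^ 2 := by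
      nlinarith [mul_le_mul_of_nonneg_left h1' (mul_nonneg hp.le hB0.le),
        mul_le_mul_of_nonneg_right h3' hn0]
    nlinarith [mul_nonneg (mul_nonneg hB2.le hq.le) hn0,
      mul_nonneg (sq_nonneg B) (by positivity : (0:ℝ) ≤ 4 * (n:ℝ) + 4 * q + 4)]
  set C : ℝ := 1 + ∑ i ∈ Finset.range (N + 2), y i with hCdef
  have hC0 : 0 < C := by
    have : 0 ≤ ∑ i ∈ Finset.range (N + 2), y i := Finset.sum_nonneg fun i _ => hy i
    rw [hCdef]; linarith
  refine ⟨C, hC0, ?_⟩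
  have main : ∀ n, y n ≤ C * B ^ n := by
    intro n
    induction n using Nat.strong_induction_on with
    | _ n ih =>
      rcases lt_or_ge n (N + 2) with h | h
      · have hbase : y n ≤ C := by
          have := Finset.single_le_sum (fun i (_ : i ∈ Finset.range (N + 2)) => hy i)
            (Finset.mem_range.mpr h)
          rw [hCdef]; linarith
        calc y n ≤ C := hbase
          _ ≤ C * B ^ n := le_mul_of_one_le_right hC0.le (one_le_pow₀ hB.le)
      · obtain ⟨m, rfl⟩ : ∃ m, n = m + 2 := ⟨n - 2, by omega⟩
        have hm : N ≤ m := by omega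
        have hrm := hrec m
        have hkm := hkey m hm
        have hy1 := ih (m + 1) (by omega)
        have hy0 := ih m (by omega)
        have hA : (0:ℝ) < ((m:ℝ) + 2) * ((m:ℝ) + 2 * q + 2) := by positivity
        have hBm : (0:ℝ) < B ^ m := by positivity
        have step1 : ((m:ℝ) + 2) * ((m:ℝ) + 2 * q + 2) * y (m + 2) ≤
            ((m:ℝ) + 2) * ((m:ℝ) + 2 * q + 2) * (C * B ^ (m + 2)) := by
          rw [hrm]
          have e1 : p * ((m:ℝ) + q + 1) * y (m + 1) ≤ p * ((m:ℝ) + q + 1) * (C * B ^ (m + 1)) :=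
            mul_le_mul_of_nonneg_left hy1 (by positivity)
          have e2 : (m:ℝ) * ((m:ℝ) + 2 * q) * y m ≤ (m:ℝ) * ((m:ℝ) + 2 * q) * (C * B ^ m) :=
            mul_le_mul_of_nonneg_left hy0 (by positivity)
          have e3 := mul_le_mul_of_nonneg_left hkm (by positivity : (0:ℝ) ≤ C * B ^ m)
          have eB1 : B ^ (m + 1) = B ^ m * B := pow_succ B m
          have eB2 : B ^ (m + 2) = B ^ m * (B * B) := by
            rw [pow_succ, pow_succ]; ring
          have eB3 : B ^ 2 = B * B := sq B
          rw [eB1] at e1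
          rw [eB2]
          rw [eB3] at e3
          nlinarith [e1, e2, e3]
        exact le_of_mul_le_mul_left step1 hA
  intro n
  rw [abs_of_nonneg (hy n)]
  exact main n

private lemma heun_key (p q z : ℝ) (hq : 0 < q) (y : ℕ → ℝ)
    (h0 : y 0 = 1) (h1 : y 1 = p * q / (2 * q + 1))
    (hrec : ∀ n : ℕ,
      ((n : ℝ) + 2) * ((n : ℝ) + 2 * q + 2) * y (n + 2) =
        p * ((n : ℝ) + q + 1) * y (n + 1) + (n : ℝ) * ((n : ℝ) + 2 * q) * y n)
    {A Bv Cv : ℝ}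
    (ha : HasSum (fun n : ℕ => y n * z ^ n) A)
    (hb : HasSum (fun n : ℕ => ((n:ℝ) + 1) * y (n + 1) * z ^ n) Bv)
    (hc : HasSum (fun n : ℕ => ((n:ℝ) + 2) * ((n:ℝ) + 1) * y (n + 2) * z ^ n) Cv) :
    z * (z - 1) * (z + 1) * Cv + ((2 * q + 1) * (z ^ 2 - 1) + p * z) * Bv + p * q * A = 0 := by
  set s1 : ℕ → ℝ := fun n => (n:ℝ) * ((n:ℝ) - 1) * y n * z ^ (n + 1) with hs1
  set s2 : ℕ → ℝ := fun n => -(((n:ℝ) + 2) * ((n:ℝ) + 1) * y (n + 2) * z ^ (n + 1)) with hs2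
  set s3 : ℕ → ℝ := fun n => (2 * q + 1) * (n:ℝ) * y n * z ^ (n + 1) with hs3
  set s4 : ℕ → ℝ := fun n => -((2 * q + 1) * ((n:ℝ) + 2) * y (n + 2) * z ^ (n + 1)) with hs4
  set s5 : ℕ → ℝ := fun n => p * ((n:ℝ) + 1) * y (n + 1) * z ^ (n + 1) with hs5
  set s6 : ℕ → ℝ := fun n => p * q * y (n + 1) * z ^ (n + 1) with hs6
  have HS1 : HasSum s1 (z ^ 3 * Cv) := by
    have e : (fun n : ℕ => s1 (n + 2)) =
        (fun n : ℕ => z ^ 3 * (((n:ℝ) + 2) * ((n:ℝ) + 1) * y (n + 2) * z ^ n)) := by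
      funext n; simp only [hs1]; push_cast; ring
    have h' : HasSum (fun n : ℕ => s1 (n + 2)) (z ^ 3 * Cv) := by rw [e]; exact hc.mul_left _
    have h'' := (hasSum_nat_add_iff (f := s1) 2).mp h'
    have hv : z ^ 3 * Cv + ∑ i ∈ Finset.range 2, s1 i = z ^ 3 * Cv := by
      norm_num [hs1, Finset.sum_range_succ]
    rwa [hv] at h''
  have HS2 : HasSum s2 (-(z * Cv)) := by
    have h' := (hc.mul_left z).neg
    have e : (fun n : ℕ => -(z * (((n:ℝ) + 2) * ((n:ℝ) + 1) * y (n + 2) * z ^ n))) = s2 := by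
      funext n; simp only [hs2]; ring
    rwa [e] at h'
  have HS3 : HasSum s3 ((2 * q + 1) * z ^ 2 * Bv) := by
    have e : (fun n : ℕ => s3 (n + 1)) =
        (fun n : ℕ => (2 * q + 1) * z ^ 2 * (((n:ℝ) + 1) * y (n + 1) * z ^ n)) := by
      funext n; simp only [hs3]; push_cast; ring
    have h' : HasSum (fun n : ℕ => s3 (n + 1)) ((2 * q + 1) * z ^ 2 * Bv) := by
      rw [e]; exact hb.mul_left _
    have h'' := (hasSum_nat_add_iff (f := s3) 1).mp h'
    have hv : (2 * q + 1) * z ^ 2 * Bv + ∑ i ∈ Finset.range 1, s3 i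
        = (2 * q + 1) * z ^ 2 * Bv := by
      norm_num [hs3, Finset.sum_range_succ]
    rwa [hv] at h''
  have HS4 : HasSum s4 (-((2 * q + 1) * Bv) + (2 * q + 1) * y 1) := by
    have h := hb.mul_left (-(2 * q + 1))
    have h' := (hasSum_nat_add_iff'
      (f := fun n : ℕ => -(2 * q + 1) * (((n:ℝ) + 1) * y (n + 1) * z ^ n)) 1).mpr h
    convert h' using 1
    · rfl
    · funext n; simp only [hs4]; push_cast; ring
    · norm_num; ring
  have HS5 : HasSum s5 (p * z * Bv) := by
    have h' := hb.mul_left (p * z)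
    have e : (fun n : ℕ => p * z * (((n:ℝ) + 1) * y (n + 1) * z ^ n)) = s5 := by
      funext n; simp only [hs5]; ring
    rwa [e] at h'
  have HS6 : HasSum s6 (p * q * A - p * q) := by
    have h := ha.mul_left (p * q)
    have h' := (hasSum_nat_add_iff' (f := fun n : ℕ => p * q * (y n * z ^ n)) 1).mpr h
    convert h' using 1
    · rfl
    · funext n; simp only [hs6]; ring
    · norm_num [h0]
  have total := ((((HS1.add HS2).add HS3).add HS4).add HS5).add HS6
  have zero_fun : (fun n : ℕ => s1 n + s2 n + s3 n + s4 n + s5 n + s6 n) = fun _ : ℕ => (0:ℝ) := by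
    funext n
    simp only [hs1, hs2, hs3, hs4, hs5, hs6]
    linear_combination (-(z ^ (n + 1))) * hrec n
  rw [zero_fun] at total
  have hV := total.unique hasSum_zero
  have hy1 : (2 * q + 1) * y 1 = p * q := by
    rw [h1]; field_simp
  linear_combination hV - hy1

/-- **The Heun series solves the Heun-type differential equation.**
For `p, q > 0`, the sum `y(z) = ∑ yₙ zⁿ` of the series with `y₀ = 1`,
`y₁ = pq/(2q+1)` and `(n+2)(n+2q+2) y_{n+2} = p(n+q+1) y_{n+1} + n(n+2q) yₙ`
is twice differentiable on `(0,1)` and satisfies there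
`y'' + [(2q+1)/z + (p/2)/(z-1) + (-p/2)/(z+1)] y' + (pq/(z(z-1)(z+1))) y = 0`. -/
theorem heun_series_solves_ode
    (p q : ℝ) (hp : 0 < p) (hq : 0 < q) (y : ℕ → ℝ)
    (h0 : y 0 = 1) (h1 : y 1 = p * q / (2 * q + 1))
    (hrec : ∀ n : ℕ,
      ((n : ℝ) + 2) * ((n : ℝ) + 2 * q + 2) * y (n + 2) =
        p * ((n : ℝ) + q + 1) * y (n + 1) + (n : ℝ) * ((n : ℝ) + 2 * q) * y n)
    (Y : ℝ → ℝ) (hY : Y = fun z => ∑' n : ℕ, y n * z ^ n) :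
    ∀ z ∈ Set.Ioo (0:ℝ) 1,
      DifferentiableAt ℝ Y z ∧ DifferentiableAt ℝ (deriv Y) z ∧
        deriv (deriv Y) z +
            ((2 * q + 1) / z + (p / 2) / (z - 1) + (-(p / 2)) / (z + 1)) *
              deriv Y z +
            (p * q / (z * (z - 1) * (z + 1))) * Y z = 0 := by
  intro z hz
  obtain ⟨hz0, hz1⟩ := hz
  obtain ⟨r, hrdef⟩ : ∃ r : ℝ, r = (1 + z) / 2 := ⟨_, rfl⟩
  have hr0 : 0 < r := by rw [hrdef]; linarith
  have hrne : r ≠ 0 := ne_of_gt hr0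
  have hzr : z < r := by rw [hrdef]; linarith
  have hr1 : r < 1 := by rw [hrdef]; linarith
  obtain ⟨B, hBdef⟩ : ∃ B : ℝ, B = (1 + r) / (2 * r) := ⟨_, rfl⟩
  have hB1 : 1 < B := by
    rw [hBdef, lt_div_iff₀ (by linarith : (0:ℝ) < 2 * r)]; linarith
  have hB0 : 0 < B := lt_trans one_pos hB1
  have hρ1 : B * r < 1 := by
    have e : B * r = (1 + r) / 2 := by
      rw [hBdef]; field_simp
    rw [e]; linarith
  have hρ0 : 0 < B * r := by positivity
  obtain ⟨C, hC0, hC⟩ := heun_y_growth p q hp hq y h0 h1 hrec B hB1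
  set d : ℕ → ℝ → ℝ := fun n w => (n:ℝ) * y n * w ^ (n - 1) with hd
  set d2 : ℕ → ℝ → ℝ := fun n w => (n:ℝ) * ((n - 1 : ℕ) : ℝ) * y n * w ^ (n - 1 - 1) with hd2
  have hterm1 : ∀ (n : ℕ) (w : ℝ), HasDerivAt (fun x => y n * x ^ n) (d n w) w := by
    intro n w
    have h := (hasDerivAt_pow n w).const_mul (y n)
    convert h using 1
    · rfl
    · rfl
    simp only [hd]; ring
  have hterm2 : ∀ (n : ℕ) (w : ℝ), HasDerivAt (d n) (d2 n w) w := by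
    intro n w
    have h := (hasDerivAt_pow (n - 1) w).const_mul ((n:ℝ) * y n)
    convert h using 1
    · rfl
    · rfl
    simp only [hd2]; ring
  have habs : ∀ w : ℝ, w ∈ Ioo (-r) r → |w| ≤ r :=
    fun w hw => le_of_lt (abs_lt.mpr ⟨hw.1, hw.2⟩)
  have hbound1 : ∀ (n : ℕ), ∀ w ∈ Ioo (-r) r, ‖d n w‖ ≤ C / r * ((n:ℝ) * (B * r) ^ n) := by
    intro n w hw
    cases n with
    | zero => simp [hd]
    | succ m =>
      have h1 : ‖d (m + 1) w‖ = ((m:ℝ) + 1) * |y (m + 1)| * |w| ^ m := by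
        simp only [hd, Nat.add_sub_cancel, Real.norm_eq_abs, abs_mul, abs_pow]
        rw [abs_of_nonneg (by positivity : (0:ℝ) ≤ ((m + 1 : ℕ) : ℝ))]
        push_cast; ring
      rw [h1]
      have h2 : ((m:ℝ) + 1) * |y (m + 1)| * |w| ^ m ≤ ((m:ℝ) + 1) * (C * B ^ (m + 1)) * r ^ m := by
        gcongr
        · exact hC (m + 1)
        · exact habs w hw
      refine le_trans h2 (le_of_eq ?_)
      rw [mul_pow]
      push_cast
      field_simp
      ring
  have hbound2 : ∀ (n : ℕ), ∀ w ∈ Ioo (-r) r,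
      ‖d2 n w‖ ≤ C / r ^ 2 * (((n:ℝ)) ^ 2 * (B * r) ^ n) := by
    intro n w hw
    match n with
    | 0 => simp [hd2]
    | 1 => simp [hd2]; positivity
    | (m + 2) =>
      have h1 : ‖d2 (m + 2) w‖ = ((m:ℝ) + 2) * ((m:ℝ) + 1) * |y (m + 2)| * |w| ^ m := by
        have e : d2 (m + 2) w = ((m:ℝ) + 2) * ((m:ℝ) + 1) * y (m + 2) * w ^ m := by
          show ((m + 2 : ℕ) : ℝ) * ((m + 1 : ℕ) : ℝ) * y (m + 2) * w ^ m = _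
          push_cast; ring
        rw [Real.norm_eq_abs, e, abs_mul, abs_mul, abs_mul, abs_pow,
          abs_of_nonneg (by positivity : (0:ℝ) ≤ (m:ℝ) + 2),
          abs_of_nonneg (by positivity : (0:ℝ) ≤ (m:ℝ) + 1)]
      rw [h1]
      have h2 : ((m:ℝ) + 2) * ((m:ℝ) + 1) * |y (m + 2)| * |w| ^ m ≤
          ((m:ℝ) + 2) * ((m:ℝ) + 2) * (C * B ^ (m + 2)) * r ^ m := by
        gcongr
        · linarith
        · exact hC (m + 2)
        · exact habs w hw
      refine le_trans h2 (le_of_eq ?_)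
      rw [mul_pow]
      push_cast
      field_simp
      ring
  have hspec : ‖B * r‖ < 1 := by
    rw [Real.norm_eq_abs, abs_of_pos hρ0]; exact hρ1
  have hu1 : Summable (fun n : ℕ => C / r * ((n:ℝ) * (B * r) ^ n)) := by
    have h := (summable_pow_mul_geometric_of_norm_lt_one 1 hspec).mul_left (C / r)
    simpa [pow_one] using h
  have hu2 : Summable (fun n : ℕ => C / r ^ 2 * (((n:ℝ)) ^ 2 * (B * r) ^ n)) :=
    (summable_pow_mul_geometric_of_norm_lt_one 2 hspec).mul_left _
  have hBz1 : B * z < 1 := lt_trans (by nlinarith : B * z < B * r) hρ1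
  have hsum_f0 : Summable (fun n : ℕ => y n * z ^ n) := by
    refine Summable.of_norm_bounded
      ((summable_geometric_of_lt_one (by positivity) hBz1).mul_left C) ?_
    intro n
    rw [Real.norm_eq_abs, abs_mul, abs_pow, abs_of_pos hz0]
    calc |y n| * z ^ n ≤ (C * B ^ n) * z ^ n := by
          gcongr; exact hC n
      _ = C * (B * z) ^ n := by rw [mul_pow]; ring
  have hsopen : IsOpen (Ioo (-r) r) := isOpen_Ioo
  have hsconn : IsPreconnected (Ioo (-r) r) := isPreconnected_Ioo
  have hzs : z ∈ Ioo (-r) r := ⟨by linarith, hzr⟩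
  have hg : ∀ x ∈ Ioo (-r) r, HasDerivAt Y (∑' n, d n x) x := by
    intro x hx
    rw [hY]
    exact hasDerivAt_tsum_of_isPreconnected hu1 hsopen hsconn
      (fun n w _ => hterm1 n w) hbound1 hzs hsum_f0 hx
  have hsum_d : ∀ x ∈ Ioo (-r) r, Summable (fun n => d n x) :=
    fun x hx => Summable.of_norm_bounded hu1 (fun n => hbound1 n x hx)
  have hg2 : ∀ x ∈ Ioo (-r) r, HasDerivAt (fun w => ∑' n, d n w) (∑' n, d2 n x) x := by
    intro x hx
    exact hasDerivAt_tsum_of_isPreconnected hu2 hsopen hsconn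
      (fun n w _ => hterm2 n w) hbound2 hzs (hsum_d z hzs) hx
  have hsum_d2 : Summable (fun n => d2 n z) :=
    Summable.of_norm_bounded hu2 (fun n => hbound2 n z hzs)
  have hDY : deriv Y =ᶠ[nhds z] (fun w => ∑' n, d n w) := by
    filter_upwards [hsopen.mem_nhds hzs] with x hx using (hg x hx).deriv
  have hdY_eq : deriv Y z = ∑' n, d n z := (hg z hzs).deriv
  have hdd : deriv (deriv Y) z = ∑' n, d2 n z := by
    rw [Filter.EventuallyEq.deriv_eq hDY]
    exact (hg2 z hzs).deriv
  refine ⟨(hg z hzs).differentiableAt, ?_, ?_⟩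
  · exact (Filter.EventuallyEq.differentiableAt_iff hDY).mpr (hg2 z hzs).differentiableAt
  · have hsa : HasSum (fun n : ℕ => y n * z ^ n) (Y z) := by
      rw [hY]; exact hsum_f0.hasSum
    have hb' : HasSum (fun n : ℕ => ((n:ℝ) + 1) * y (n + 1) * z ^ n) (∑' n, d n z) := by
      have hsd := hsum_d z hzs
      have h1' := ((summable_nat_add_iff 1).mpr hsd).hasSum
      have e : (fun n : ℕ => d (n + 1) z) = fun n : ℕ => ((n:ℝ) + 1) * y (n + 1) * z ^ n := by
        funext n; simp only [hd, Nat.add_sub_cancel]; push_cast; ring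
      have ev : ∑' n, d n z = ∑' (n : ℕ), d (n + 1) z := by
        rw [Summable.tsum_eq_zero_add hsd]; simp [hd]
      rw [ev, ← e]; exact h1'
    have hc' : HasSum (fun n : ℕ => ((n:ℝ) + 2) * ((n:ℝ) + 1) * y (n + 2) * z ^ n)
        (∑' n, d2 n z) := by
      have h2' := ((summable_nat_add_iff 2).mpr hsum_d2).hasSum
      have e : (fun n : ℕ => d2 (n + 2) z)
          = fun n : ℕ => ((n:ℝ) + 2) * ((n:ℝ) + 1) * y (n + 2) * z ^ n := by
        funext n
        show ((n + 2 : ℕ) : ℝ) * ((n + 1 : ℕ) : ℝ) * y (n + 2) * z ^ n = _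
        push_cast; ring
      have ev : ∑' n, d2 n z = ∑' (n : ℕ), d2 (n + 2) z := by
        rw [Summable.tsum_eq_zero_add hsum_d2, Summable.tsum_eq_zero_add ((summable_nat_add_iff 1).mpr hsum_d2)]
        have e2 : ∑' (n : ℕ), d2 (n + 1 + 1) z = ∑' (n : ℕ), d2 (n + 2) z := by
          apply tsum_congr; intro n; norm_num
        rw [e2]
        norm_num [hd2]
      rw [ev, ← e]; exact h2'
    have key := heun_key p q z hq y h0 h1 hrec hsa hb' hc'
    rw [hdd, hdY_eq]
    have hzne : z ≠ 0 := ne_of_gt hz0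
    have hz1ne : z - 1 ≠ 0 := sub_ne_zero.mpr (ne_of_lt hz1)
    have hz2ne : z + 1 ≠ 0 := ne_of_gt (by linarith)
    have e : (∑' n, d2 n z) +
        ((2 * q + 1) / z + (p / 2) / (z - 1) + (-(p / 2)) / (z + 1)) * (∑' n, d n z) +
        (p * q / (z * (z - 1) * (z + 1))) * Y z
        = (z * (z - 1) * (z + 1) * (∑' n, d2 n z) +
            ((2 * q + 1) * (z ^ 2 - 1) + p * z) * (∑' n, d n z) + p * q * Y z) /
          (z * (z - 1) * (z + 1)) := by
      field_simp
      ring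
    rw [e, key]
    simp
end

section
/- Let a, b, c be real numbers such that none of c, c + 1, c + 2 is a nonpositive integer, and let t be real with |t| < 1. Then the contiguity relation t·(1 − t)·(a + 1)·(b + 1)·₂F₁(a + 2, b + 2; c + 2; t) + [ c − (a + b + 1)·t ]·(c + 1)·₂F₁(a + 1, b + 1; c + 1; t) − c·(c + 1)·₂F₁(a, b; c; t) = 0 holds. -/
/-- The Pochhammer rising factorial `(a)ₙ = a (a+1) ⋯ (a+n-1)`. -/
noncomputable def poch (a : ℝ) : ℕ → ℝ
  | 0 => 1
  | n + 1 => poch a n * (a + n)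

/-- The Gauss hypergeometric function `₂F₁(a, b; c; x)`, defined for `|x| < 1`
by the convergent power series `∑ (a)ₙ (b)ₙ / (c)ₙ · xⁿ/n!`. -/
noncomputable def hyp2F1 (a b c x : ℝ) : ℝ :=
  ∑' n : ℕ, poch a n * poch b n / poch c n * x ^ n / (Nat.factorial n : ℝ)

lemma poch_succ (a : ℝ) (n : ℕ) : poch a (n + 1) = poch a n * (a + n) := rfl

lemma poch_succ' (a : ℝ) (n : ℕ) : poch a (n + 1) = a * poch (a + 1) n := by
  induction n with
  | zero => simp [poch]
  | succ n ih =>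
    rw [poch_succ, ih, poch_succ]
    push_cast
    ring

lemma poch_ne_zero {c : ℝ} (hc : ∀ n : ℕ, c ≠ -(n : ℝ)) (n : ℕ) : poch c n ≠ 0 := by
  induction n with
  | zero => simp [poch]
  | succ n ih =>
    rw [poch_succ]
    refine mul_ne_zero ih fun h => hc n (by linarith)

lemma summable_hyp (a b c t : ℝ) (hc : ∀ n : ℕ, c ≠ -(n : ℝ)) (ht : |t| < 1) :
    Summable (fun n : ℕ =>
      poch a n * poch b n / poch c n * t ^ n / (Nat.factorial n : ℝ)) := by
  set f : ℕ → ℝ := fun n =>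
    poch a n * poch b n / poch c n * t ^ n / (Nat.factorial n : ℝ) with hf
  have hcn : ∀ n : ℕ, c + (n : ℝ) ≠ 0 := fun n h => hc n (by linarith)
  have key : ∀ n : ℕ,
      f (n + 1) = f n * ((a + n) * (b + n) / ((c + n) * ((n : ℝ) + 1)) * t) := by
    intro n
    have hpc : poch c n ≠ 0 := poch_ne_zero hc n
    have hfac : (Nat.factorial n : ℝ) ≠ 0 := Nat.cast_ne_zero.2 (Nat.factorial_ne_zero n)
    have hn1 : ((n : ℝ) + 1) ≠ 0 := by positivity
    simp only [hf, poch_succ, Nat.factorial_succ, pow_succ]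
    push_cast
    field_simp
  -- the ratio tends to |t| < 1
  have t1 : Filter.Tendsto (fun n : ℕ => c + (n : ℝ)) Filter.atTop Filter.atTop := by
    exact Filter.tendsto_atTop_add_const_left _ c tendsto_natCast_atTop_atTop
  have t2 : Filter.Tendsto (fun n : ℕ => (n : ℝ) + 1) Filter.atTop Filter.atTop := by
    exact Filter.tendsto_atTop_add_const_right _ 1 tendsto_natCast_atTop_atTop
  have h1 : Filter.Tendsto (fun n : ℕ => (a + (n : ℝ)) / (c + n)) Filter.atTop (nhds 1) := by
    have heq : (fun n : ℕ => (a + (n : ℝ)) / (c + n))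
        = fun n : ℕ => 1 + (a - c) / (c + (n : ℝ)) := by
      funext n
      field_simp [hcn n]
      ring
    rw [heq]
    simpa using tendsto_const_nhds.add (tendsto_const_nhds.div_atTop t1)
  have h2 : Filter.Tendsto (fun n : ℕ => (b + (n : ℝ)) / ((n : ℝ) + 1))
      Filter.atTop (nhds 1) := by
    have heq : (fun n : ℕ => (b + (n : ℝ)) / ((n : ℝ) + 1))
        = fun n : ℕ => 1 + (b - 1) / ((n : ℝ) + 1) := by
      funext n
      have : ((n : ℝ) + 1) ≠ 0 := by positivity
      field_simp
      ring
    rw [heq]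
    simpa using tendsto_const_nhds.add (tendsto_const_nhds.div_atTop t2)
  have hq : Filter.Tendsto
      (fun n : ℕ => (a + n) * (b + n) / ((c + n) * ((n : ℝ) + 1)))
      Filter.atTop (nhds 1) := by
    have heq : (fun n : ℕ => (a + (n : ℝ)) * (b + n) / ((c + n) * ((n : ℝ) + 1)))
        = fun n : ℕ => ((a + (n : ℝ)) / (c + n)) * ((b + (n : ℝ)) / ((n : ℝ) + 1)) := by
      funext n
      rw [div_mul_div_comm]
    rw [heq]
    simpa using h1.mul h2
  have habs : Filter.Tendsto
      (fun n : ℕ => |(a + n) * (b + n) / ((c + n) * ((n : ℝ) + 1))| * |t|)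
      Filter.atTop (nhds |t|) := by
    simpa using hq.abs.mul_const |t|
  have hr1 : (1 + |t|) / 2 < 1 := by linarith
  have hlt : |t| < (1 + |t|) / 2 := by linarith
  refine summable_of_ratio_norm_eventually_le hr1 ?_
  filter_upwards [(habs.eventually_lt_const hlt)] with n hn
  rw [key n, Real.norm_eq_abs, Real.norm_eq_abs, abs_mul, abs_mul]
  have h0 : (0 : ℝ) ≤ |f n| := abs_nonneg _
  nlinarith [hn.le, abs_nonneg ((a + n) * (b + n) / ((c + n) * ((n : ℝ) + 1)))]

/-- shift of a sequence by one -/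
noncomputable def sh (f : ℕ → ℝ) : ℕ → ℝ := fun n => Nat.casesOn n 0 f

lemma hasSum_shift {f : ℕ → ℝ} {t s : ℝ} (h : HasSum (fun n => f n * t ^ n) s) :
    HasSum (fun n => sh f n * t ^ n) (t * s) := by
  have h0 : ∀ x ∉ Set.range Nat.succ, sh f x * t ^ x = 0 := by
    intro x hx
    have hx0 : x = 0 := by
      cases x with
      | zero => rfl
      | succ m => exact absurd ⟨m, rfl⟩ hx
    subst hx0
    simp [sh]
  refine (Function.Injective.hasSum_iff Nat.succ_injective h0).mp ?_
  have heq : ((fun n => sh f n * t ^ n) ∘ Nat.succ) = fun n => t * (f n * t ^ n) := by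
    funext n
    simp only [Function.comp, sh, Nat.succ_eq_add_one, pow_succ]
    ring
  rw [heq]
  exact h.mul_left t

set_option maxHeartbeats 2000000 in
/-- **A contiguity relation for the Gauss hypergeometric function:**
`t(1-t)(a+1)(b+1) ₂F₁(a+2,b+2;c+2;t) + [c-(a+b+1)t](c+1) ₂F₁(a+1,b+1;c+1;t)
  - c(c+1) ₂F₁(a,b;c;t) = 0`. -/
theorem hyp2F1_contiguity
    (a b c t : ℝ)
    (hc : ∀ n : ℕ, c ≠ -(n : ℝ))
    (hc1 : ∀ n : ℕ, c + 1 ≠ -(n : ℝ))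
    (hc2 : ∀ n : ℕ, c + 2 ≠ -(n : ℝ))
    (ht : |t| < 1) :
    t * (1 - t) * (a + 1) * (b + 1) * hyp2F1 (a + 2) (b + 2) (c + 2) t +
        (c - (a + b + 1) * t) * (c + 1) * hyp2F1 (a + 1) (b + 1) (c + 1) t -
        c * (c + 1) * hyp2F1 a b c t = 0 := by
  -- coefficient sequences
  set g0 : ℕ → ℝ := fun n => poch a n * poch b n / poch c n / (Nat.factorial n : ℝ) with hg0
  set g1 : ℕ → ℝ := fun n =>
    poch (a + 1) n * poch (b + 1) n / poch (c + 1) n / (Nat.factorial n : ℝ) with hg1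
  set g2 : ℕ → ℝ := fun n =>
    poch (a + 2) n * poch (b + 2) n / poch (c + 2) n / (Nat.factorial n : ℝ) with hg2
  have hsum0 : Summable (fun n : ℕ => g0 n * t ^ n) := by
    refine (summable_hyp a b c t hc ht).congr fun n => by simp [hg0]; ring
  have hsum1 : Summable (fun n : ℕ => g1 n * t ^ n) := by
    refine (summable_hyp (a + 1) (b + 1) (c + 1) t hc1 ht).congr fun n => by simp [hg1]; ring
  have hsum2 : Summable (fun n : ℕ => g2 n * t ^ n) := by
    refine (summable_hyp (a + 2) (b + 2) (c + 2) t hc2 ht).congr fun n => by simp [hg2]; ring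
  have e0 : hyp2F1 a b c t = ∑' n : ℕ, g0 n * t ^ n := by
    unfold hyp2F1; exact tsum_congr fun n => by simp [hg0]; ring
  have e1 : hyp2F1 (a + 1) (b + 1) (c + 1) t = ∑' n : ℕ, g1 n * t ^ n := by
    unfold hyp2F1; exact tsum_congr fun n => by simp [hg1]; ring
  have e2 : hyp2F1 (a + 2) (b + 2) (c + 2) t = ∑' n : ℕ, g2 n * t ^ n := by
    unfold hyp2F1; exact tsum_congr fun n => by simp [hg2]; ring
  set S0 := ∑' n : ℕ, g0 n * t ^ n
  set S1 := ∑' n : ℕ, g1 n * t ^ n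
  set S2 := ∑' n : ℕ, g2 n * t ^ n
  have H0 : HasSum (fun n : ℕ => g0 n * t ^ n) S0 := hsum0.hasSum
  have H1 : HasSum (fun n : ℕ => g1 n * t ^ n) S1 := hsum1.hasSum
  have H2 : HasSum (fun n : ℕ => g2 n * t ^ n) S2 := hsum2.hasSum
  have H2s : HasSum (fun n : ℕ => sh g2 n * t ^ n) (t * S2) := hasSum_shift H2
  have H2ss : HasSum (fun n : ℕ => sh (sh g2) n * t ^ n) (t * (t * S2)) := hasSum_shift H2s
  have H1s : HasSum (fun n : ℕ => sh g1 n * t ^ n) (t * S1) := hasSum_shift H1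
  -- total combination
  have HG : HasSum
      (fun n : ℕ =>
        (a + 1) * (b + 1) * (sh g2 n * t ^ n) - (a + 1) * (b + 1) * (sh (sh g2) n * t ^ n)
          + c * (c + 1) * (g1 n * t ^ n) - (a + b + 1) * (c + 1) * (sh g1 n * t ^ n)
          - c * (c + 1) * (g0 n * t ^ n))
      ((a + 1) * (b + 1) * (t * S2) - (a + 1) * (b + 1) * (t * (t * S2))
        + c * (c + 1) * S1 - (a + b + 1) * (c + 1) * (t * S1) - c * (c + 1) * S0) :=
    ((((H2s.mul_left _).sub (H2ss.mul_left _)).add (H1.mul_left _)).sub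
      (H1s.mul_left _)).sub (H0.mul_left _)
  -- key coefficient identity
  have hcoef : ∀ n : ℕ,
      (a + 1) * (b + 1) * (sh g2 n * t ^ n) - (a + 1) * (b + 1) * (sh (sh g2) n * t ^ n)
          + c * (c + 1) * (g1 n * t ^ n) - (a + b + 1) * (c + 1) * (sh g1 n * t ^ n)
          - c * (c + 1) * (g0 n * t ^ n) = 0 := by
    have hc0 : c ≠ 0 := by simpa using hc 0
    have hc10 : c + 1 ≠ 0 := by simpa using hc1 0
    intro n
    match n with
    | 0 =>
      simp [sh, hg0, hg1, poch]
    | 1 =>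
      simp only [sh, hg0, hg1, hg2]
      norm_num [poch]
      field_simp
      ring
    | (m + 2) =>
      simp only [sh, hg0, hg1, hg2]
      have hR : poch (c + 2) m ≠ 0 := poch_ne_zero hc2 m
      have hc2m : c + 2 + (m : ℝ) ≠ 0 := fun h => hc2 m (by linarith)
      have hfac : (Nat.factorial m : ℝ) ≠ 0 := Nat.cast_ne_zero.2 (Nat.factorial_ne_zero m)
      have hm1 : ((m : ℝ) + 1) ≠ 0 := by positivity
      have hm2 : ((m : ℝ) + 2) ≠ 0 := by positivity
      have pA2 : poch (a + 2) (m + 1) = poch (a + 2) m * (a + 2 + m) := poch_succ _ m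
      have pB2 : poch (b + 2) (m + 1) = poch (b + 2) m * (b + 2 + m) := poch_succ _ m
      have pC2 : poch (c + 2) (m + 1) = poch (c + 2) m * (c + 2 + m) := poch_succ _ m
      have pA1 : poch (a + 1) (m + 1) = (a + 1) * poch (a + 2) m := by
        rw [poch_succ' _ m, show a + 1 + 1 = a + 2 by ring]
      have pB1 : poch (b + 1) (m + 1) = (b + 1) * poch (b + 2) m := by
        rw [poch_succ' _ m, show b + 1 + 1 = b + 2 by ring]
      have pC1 : poch (c + 1) (m + 1) = (c + 1) * poch (c + 2) m := by
        rw [poch_succ' _ m, show c + 1 + 1 = c + 2 by ring]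
      have pA1' : poch (a + 1) (m + 2) = (a + 1) * (poch (a + 2) m * (a + 2 + m)) := by
        rw [poch_succ' _ (m + 1), show a + 1 + 1 = a + 2 by ring, pA2]
      have pB1' : poch (b + 1) (m + 2) = (b + 1) * (poch (b + 2) m * (b + 2 + m)) := by
        rw [poch_succ' _ (m + 1), show b + 1 + 1 = b + 2 by ring, pB2]
      have pC1' : poch (c + 1) (m + 2) = (c + 1) * (poch (c + 2) m * (c + 2 + m)) := by
        rw [poch_succ' _ (m + 1), show c + 1 + 1 = c + 2 by ring, pC2]
      have pA0 : poch a (m + 2) = a * ((a + 1) * poch (a + 2) m) := by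
        rw [poch_succ' _ (m + 1), pA1]
      have pB0 : poch b (m + 2) = b * ((b + 1) * poch (b + 2) m) := by
        rw [poch_succ' _ (m + 1), pB1]
      have pC0 : poch c (m + 2) = c * ((c + 1) * poch (c + 2) m) := by
        rw [poch_succ' _ (m + 1), pC1]
      have hfac1 : (Nat.factorial (m + 1) : ℝ) = ((m : ℝ) + 1) * (Nat.factorial m : ℝ) := by
        rw [Nat.factorial_succ]; push_cast; ring
      have hfac2 : (Nat.factorial (m + 2) : ℝ)
          = ((m : ℝ) + 2) * (((m : ℝ) + 1) * (Nat.factorial m : ℝ)) := by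
        push_cast [Nat.factorial_succ]; ring
      rw [pA2, pB2, pC2, pA1, pB1, pC1, pA1', pB1', pC1', pA0, pB0, pC0, hfac1, hfac2]
      simp only [pow_succ]
      field_simp
      ring
  have hzero : (fun n : ℕ =>
      (a + 1) * (b + 1) * (sh g2 n * t ^ n) - (a + 1) * (b + 1) * (sh (sh g2) n * t ^ n)
        + c * (c + 1) * (g1 n * t ^ n) - (a + b + 1) * (c + 1) * (sh g1 n * t ^ n)
        - c * (c + 1) * (g0 n * t ^ n)) = fun _ => (0 : ℝ) := funext hcoef
  rw [hzero] at HG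
  have h2 := hasSum_zero.unique HG
  rw [e0, e1, e2]
  linear_combination -h2
end

section
/- Let p > 0, q > 0, k > 0 and let N be a real number. Define, for z ∈ ℝ, f(z) := ( q·N/(z² + k²) ) · exp[ −q·z + (p/k)·arctan(z/k) ] · ∫_{−∞}^z exp[ q·t − (p/k)·arctan(t/k) ] dt. Then the integral defining f converges for every z, f is differentiable on ℝ, and f satisfies the first-order equation (d/dz)[ (z² + k²)·f(z) ] − p·f(z) + q·(z² + k²)·f(z) = q·N for all z ∈ ℝ. -/
open MeasureTheory

/-- **Nieuwenhuizen's solution of the Frisch–Lloyd equation for exponentially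
distributed delta-scatterer strengths at energy `E = k² > 0`.**
The function
`f(z) = (qN/(z²+k²)) e^{-qz + (p/k) arctan(z/k)} ∫_{-∞}^z e^{qt - (p/k) arctan(t/k)} dt`
is well defined (the integral converges), is differentiable, and satisfies
`(d/dz)[(z²+k²) f] - p f + q (z²+k²) f = qN` on all of `ℝ`. -/
theorem nieuwenhuizen_stationary_density
    (p q k N : ℝ) (hp : 0 < p) (hq : 0 < q) (hk : 0 < k)
    (f : ℝ → ℝ)
    (hf : ∀ z : ℝ, f z =
      q * N / (z ^ 2 + k ^ 2) *
        Real.exp (-(q * z) + (p / k) * Real.arctan (z / k)) *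
        ∫ t in Set.Iic z, Real.exp (q * t - (p / k) * Real.arctan (t / k))) :
    (∀ z : ℝ, IntegrableOn
        (fun t => Real.exp (q * t - (p / k) * Real.arctan (t / k))) (Set.Iic z)) ∧
    Differentiable ℝ f ∧
    (∀ z : ℝ, deriv (fun z => (z ^ 2 + k ^ 2) * f z) z - p * f z +
        q * (z ^ 2 + k ^ 2) * f z = q * N) := by
  have hcnn : 0 ≤ p / k := le_of_lt (div_pos hp hk)
  set g : ℝ → ℝ := fun t => Real.exp (q * t - p / k * Real.arctan (t / k)) with hgdef
  have hgc : Continuous g := by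
    apply Real.continuous_exp.comp
    exact (continuous_const.mul continuous_id).sub
      (continuous_const.mul (Real.continuous_arctan.comp (continuous_id.div_const k)))
  -- Integrability of `g` on `Iic z`
  have hDpos : ∀ z : ℝ, 0 < z ^ 2 + k ^ 2 := fun z => by positivity
  have hint : ∀ z : ℝ, IntegrableOn g (Set.Iic z) := by
    intro z
    set C : ℝ := Real.exp (p / k * (Real.pi / 2)) with hCdef
    have hbound : ∀ x : ℝ, g x ≤ C * Real.exp (q * x) := by
      intro x
      have h1 : -(Real.pi / 2) < Real.arctan (x / k) := Real.neg_pi_div_two_lt_arctan _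
      have h2 : p / k * (-(Real.arctan (x / k))) ≤ p / k * (Real.pi / 2) :=
        mul_le_mul_of_nonneg_left (by linarith) hcnn
      calc g x = Real.exp (q * x - p / k * Real.arctan (x / k)) := rfl
        _ ≤ Real.exp (p / k * (Real.pi / 2) + q * x) := by
            apply Real.exp_le_exp.2; nlinarith
        _ = C * Real.exp (q * x) := by rw [hCdef, Real.exp_add]
    refine integrableOn_Iic_of_intervalIntegral_norm_bounded
      (l := Filter.atBot) (a := fun i : ℝ => i)
      (C * (Real.exp (q * z) / q)) z
      (fun i => hgc.integrableOn_Ioc) Filter.tendsto_id ?_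
    filter_upwards [Filter.eventually_le_atBot z] with i hiz
    have hII : IntervalIntegrable g volume i z := hgc.intervalIntegrable i z
    have hII2 : IntervalIntegrable (fun x => C * Real.exp (q * x)) volume i z :=
      (continuous_const.mul (Real.continuous_exp.comp
        (continuous_const.mul continuous_id))).intervalIntegrable i z
    have hmono : (∫ x in i..z, ‖g x‖) ≤ ∫ x in i..z, C * Real.exp (q * x) := by
      have : ∀ x ∈ Set.Icc i z, ‖g x‖ ≤ C * Real.exp (q * x) := fun x _ => by
        rw [Real.norm_eq_abs, abs_of_pos (Real.exp_pos _)]; exact hbound x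
      exact intervalIntegral.integral_mono_on hiz (by simpa [Real.norm_eq_abs] using hII.norm)
        hII2 this
    have hexp : (∫ x in i..z, Real.exp (q * x)) = q⁻¹ * (Real.exp (q * z) - Real.exp (q * i)) := by
      have := intervalIntegral.integral_comp_mul_left (a := i) (b := z)
        (f := Real.exp) (c := q) hq.ne'
      rw [this]; simp [smul_eq_mul]
    have hconst : (∫ x in i..z, C * Real.exp (q * x)) = C * ∫ x in i..z, Real.exp (q * x) :=
      intervalIntegral.integral_const_mul _ _
    have hCpos : 0 < C := Real.exp_pos _
    have hei : 0 < Real.exp (q * i) := Real.exp_pos _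
    calc (∫ x in i..z, ‖g x‖) ≤ C * (q⁻¹ * (Real.exp (q * z) - Real.exp (q * i))) := by
          rw [← hexp, ← hconst]; exact hmono
      _ ≤ C * (Real.exp (q * z) / q) := by
          rw [div_eq_inv_mul]
          apply mul_le_mul_of_nonneg_left _ hCpos.le
          rw [mul_comm q⁻¹ (Real.exp (q * z))] at *
          have : Real.exp (q * z) - Real.exp (q * i) ≤ Real.exp (q * z) := by linarith
          calc q⁻¹ * (Real.exp (q * z) - Real.exp (q * i))
              ≤ q⁻¹ * Real.exp (q * z) := by
                exact mul_le_mul_of_nonneg_left this (inv_nonneg.2 hq.le)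
            _ = Real.exp (q * z) * q⁻¹ := by ring
  -- The antiderivative `F`
  set F : ℝ → ℝ := fun z => ∫ t in Set.Iic z, g t with hFdef
  have hFeq : F = fun u => F 0 + ∫ x in (0:ℝ)..u, g x := by
    funext u
    have h := intervalIntegral.integral_Iic_sub_Iic (hint 0) (hint u)
    simp only [hFdef]
    linarith [h]
  have hF : ∀ z : ℝ, HasDerivAt F (g z) z := by
    intro z
    rw [hFeq]
    exact (intervalIntegral.integral_hasDerivAt_right (hgc.intervalIntegrable 0 z)
      (hgc.stronglyMeasurable.stronglyMeasurableAtFilter) hgc.continuousAt).const_add (F 0)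
  -- The exponential factor `E`
  set E : ℝ → ℝ := fun z => Real.exp (-(q * z) + p / k * Real.arctan (z / k)) with hEdef
  have hE : ∀ z : ℝ, HasDerivAt E ((-q + p / (z ^ 2 + k ^ 2)) * E z) z := by
    intro z
    have h1 : HasDerivAt (fun z : ℝ => -(q * z)) (-q) z := by
      have := ((hasDerivAt_id z).const_mul q).neg
      rw [mul_one] at this
      exact this
    have h2 : HasDerivAt (fun z : ℝ => Real.arctan (z / k))
        (1 / (1 + (z / k) ^ 2) * (1 / k)) z := by
      have := (Real.hasDerivAt_arctan (z / k)).comp z ((hasDerivAt_id z).div_const k)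
      simpa [one_div, Function.comp_def] using this
    have h3 : HasDerivAt (fun z : ℝ => -(q * z) + p / k * Real.arctan (z / k))
        (-q + p / k * (1 / (1 + (z / k) ^ 2) * (1 / k))) z := h1.add (h2.const_mul _)
    have h4 := h3.exp
    have key : -q + p / k * (1 / (1 + (z / k) ^ 2) * (1 / k)) =
        -q + p / (z ^ 2 + k ^ 2) := by
      have hk2 : (k : ℝ) ≠ 0 := hk.ne'
      have h5 : (1 : ℝ) + (z / k) ^ 2 ≠ 0 := by positivity
      have h6 : z ^ 2 + k ^ 2 ≠ 0 := (hDpos z).ne'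
      field_simp
      ring
    rw [← key, mul_comm]
    exact h4
  -- `f` in terms of `E` and `F`
  have hf' : ∀ z : ℝ, f z = q * N / (z ^ 2 + k ^ 2) * E z * F z := fun z => hf z
  refine ⟨hint, ?_, ?_⟩
  · -- differentiability
    have : f = fun z => q * N / (z ^ 2 + k ^ 2) * E z * F z := funext hf'
    rw [this]
    intro z
    have hden : DifferentiableAt ℝ (fun z : ℝ => z ^ 2 + k ^ 2) z := by fun_prop
    have h1 : DifferentiableAt ℝ (fun z : ℝ => q * N / (z ^ 2 + k ^ 2)) z :=
      (differentiableAt_const _).div hden (hDpos z).ne'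
    exact (h1.mul (hE z).differentiableAt).mul (hF z).differentiableAt
  · -- the differential equation
    intro z
    have hfun : (fun z : ℝ => (z ^ 2 + k ^ 2) * f z) = fun z => q * N * (E z * F z) := by
      funext u
      rw [hf' u]
      field_simp
    have hGd : HasDerivAt (fun z : ℝ => q * N * (E z * F z))
        (q * N * ((-q + p / (z ^ 2 + k ^ 2)) * E z * F z + E z * g z)) z :=
      ((hE z).mul (hF z)).const_mul _
    have hEg : E z * g z = 1 := by
      rw [hEdef, hgdef, ← Real.exp_add]
      norm_num
    have hderiv : deriv (fun z : ℝ => (z ^ 2 + k ^ 2) * f z) z =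
        q * N * ((-q + p / (z ^ 2 + k ^ 2)) * E z * F z + E z * g z) := by
      rw [hfun]; exact hGd.deriv
    rw [hderiv, hf' z, hEg]
    have h6 : z ^ 2 + k ^ 2 ≠ 0 := (hDpos z).ne'
    field_simp
    ring
end
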